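/- arXiv:1904.12281 — 4 statements merged into one kernel-verified Lean document; each statement's English description precedes it below -/
import Mathlib

section
/- The unique maximizer (ξ_j^{(N)*})_{j=1}^N of T_N satisfies the recursion (1-p)/(1+γξ_{j+1}^{(N)*}) = 1/(1+γξ_j^{(N)*}) - p/(1 + (γ/w)(B - ∑_{i=1}^j ξ_i^{(N)*})) for j = 1,…,N-1, together with the terminal condition ξ_N^{(N)*} = (B - ∑_{i=1}^N ξ_i^{(N)*})/w. -/
open Real

/-- The finite-horizon throughput functional `T_N` (log base 2), evaluated at a
sequence indexed from 1 (only coordinates `1,…,N` matter). -/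
noncomputable def TN (B γ p : ℝ) (w N : ℕ) (ξ : ℕ → ℝ) : ℝ :=
  (∑ k ∈ Finset.Icc 1 w, p ^ 2 * (1 - p) ^ (k - 1) * ((k : ℝ) / 2) *
      Real.logb 2 (1 + γ * B / k))
  + (∑ j ∈ Finset.Icc 1 N, p * (1 - p) ^ (j + w - 1) * (1 / 2) *
      Real.logb 2 (1 + γ * ξ j))
  + (∑ k ∈ Finset.Icc 1 N, p ^ 2 * (1 - p) ^ (k + w - 1) * ((w : ℝ) / 2) *
      Real.logb 2 (1 + (γ / w) * (B - ∑ j ∈ Finset.Icc 1 k, ξ j)))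
  + p * (1 - p) ^ (w + N) * ((w : ℝ) / 2) *
      Real.logb 2 (1 + (γ / w) * (B - ∑ j ∈ Finset.Icc 1 N, ξ j))

/-- The admissible simplex `{ξ : ξ_j ≥ 0, ∑_{j=1}^N ξ_j ≤ B}`, as sequences supported
on coordinates `1,…,N`. -/
def adm (B : ℝ) (N : ℕ) : Set (ℕ → ℝ) :=
  {ξ | (∀ j, 1 ≤ j → j ≤ N → 0 ≤ ξ j) ∧ (∀ j, j = 0 ∨ N < j → ξ j = 0)
      ∧ ∑ j ∈ Finset.Icc 1 N, ξ j ≤ B}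

open Filter

noncomputable def Br (B γ p : ℝ) (w N : ℕ) (ξ : ℕ → ℝ) (j : ℕ) : ℝ :=
  p * (1-p)^(j+w-1) / (1 + γ * ξ j)
  - ∑ k ∈ Finset.Icc j N, p^2 * (1-p)^(k+w-1) / (1 + (γ / w) * (B - ∑ i ∈ Finset.Icc 1 k, ξ i))
  - p * (1-p)^(w+N) / (1 + (γ / w) * (B - ∑ i ∈ Finset.Icc 1 N, ξ i))

private lemma logb_affine_deriv (c a b x : ℝ) (h : 0 < a + b * x) :
    HasDerivAt (fun t => c * Real.logb 2 (a + b * t)) (c * b / (Real.log 2 * (a + b * x))) x := by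
  have hL : (0:ℝ) < Real.log 2 := Real.log_pos (by norm_num)
  have h1 : HasDerivAt (fun t : ℝ => a + b * t) b x := by
    simpa using ((hasDerivAt_id x).const_mul b).const_add a
  have h2 : HasDerivAt (fun t => Real.log (a + b * t)) ((a + b * x)⁻¹ * b) x :=
    by have := (Real.hasDerivAt_log h.ne').comp x h1; exact this
  have h3 := h2.const_mul (c / Real.log 2)
  have hfun : (fun t => c * Real.logb 2 (a + b * t))
      = fun t => c / Real.log 2 * Real.log (a + b * t) := by
    funext t; rw [Real.logb]; ring
  rw [hfun]
  refine h3.congr_deriv (Eq.symm ?_)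
  field_simp

private lemma TN_update_hasDerivAt (B γ p : ℝ) (w N : ℕ) (ξ : ℕ → ℝ) (j : ℕ)
    (hγ : 0 < γ) (hw : 1 ≤ w) (hj1 : 1 ≤ j) (hjN : j ≤ N)
    (hE : 0 < 1 + γ * ξ j)
    (hD : ∀ k, 1 ≤ k → k ≤ N → 0 < 1 + (γ / w) * (B - ∑ i ∈ Finset.Icc 1 k, ξ i)) :
    HasDerivAt (fun t => TN B γ p w N (Function.update ξ j t))
      (γ / (2 * Real.log 2) * Br B γ p w N ξ j) (ξ j) := by
  have hL : (0:ℝ) < Real.log 2 := Real.log_pos (by norm_num)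
  have hw0 : ((w:ℝ)) ≠ 0 := Nat.cast_ne_zero.mpr (by omega)
  have hmemj : j ∈ Finset.Icc 1 N := Finset.mem_Icc.mpr ⟨hj1, hjN⟩
  -- P part
  have hP : HasDerivAt
      (fun t => ∑ i ∈ Finset.Icc 1 N, p * (1-p)^(i+w-1) * (1/2) *
          Real.logb 2 (1 + γ * Function.update ξ j t i))
      (γ / (2 * Real.log 2) * (p * (1-p)^(j+w-1) / (1 + γ * ξ j))) (ξ j) := by
    have h : HasDerivAt
        (fun t => ∑ i ∈ Finset.Icc 1 N, p * (1-p)^(i+w-1) * (1/2) *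
            Real.logb 2 (1 + γ * Function.update ξ j t i))
        (∑ i ∈ Finset.Icc 1 N,
          if i = j then γ / (2 * Real.log 2) * (p * (1-p)^(j+w-1) / (1 + γ * ξ j)) else 0)
        (ξ j) := by
      apply HasDerivAt.fun_sum
      intro i hi
      by_cases hij : i = j
      · subst hij
        rw [if_pos rfl]
        have hfun : (fun t => p * (1-p)^(i+w-1) * (1/2) *
              Real.logb 2 (1 + γ * Function.update ξ i t i))
            = fun t => (p * (1-p)^(i+w-1) * (1/2)) * Real.logb 2 (1 + γ * t) := by
          funext t; rw [Function.update_self]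
        rw [hfun]
        have hder := logb_affine_deriv (p * (1-p)^(i+w-1) * (1/2)) 1 γ (ξ i) hE
        refine hder.congr_deriv (Eq.symm ?_)
        field_simp
      · simp only [if_neg hij]
        have hfun : (fun t => p * (1-p)^(i+w-1) * (1/2) *
              Real.logb 2 (1 + γ * Function.update ξ j t i))
            = fun _ => p * (1-p)^(i+w-1) * (1/2) * Real.logb 2 (1 + γ * ξ i) := by
          funext t; rw [Function.update_of_ne hij]
        rw [hfun]
        exact hasDerivAt_const _ _
    rwa [Finset.sum_ite_eq' (Finset.Icc 1 N) j, if_pos hmemj] at h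
  -- Q part
  have hQ : HasDerivAt
      (fun t => ∑ k ∈ Finset.Icc 1 N, p^2 * (1-p)^(k+w-1) * ((w:ℝ)/2) *
          Real.logb 2 (1 + (γ / w) * (B - ∑ i ∈ Finset.Icc 1 k, Function.update ξ j t i)))
      (-∑ k ∈ Finset.Icc j N, γ / (2 * Real.log 2) *
          (p^2 * (1-p)^(k+w-1) / (1 + (γ / w) * (B - ∑ i ∈ Finset.Icc 1 k, ξ i)))) (ξ j) := by
    have h : HasDerivAt
        (fun t => ∑ k ∈ Finset.Icc 1 N, p^2 * (1-p)^(k+w-1) * ((w:ℝ)/2) *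
            Real.logb 2 (1 + (γ / w) * (B - ∑ i ∈ Finset.Icc 1 k, Function.update ξ j t i)))
        (∑ k ∈ Finset.Icc 1 N,
          if j ≤ k then -(γ / (2 * Real.log 2) *
            (p^2 * (1-p)^(k+w-1) / (1 + (γ / w) * (B - ∑ i ∈ Finset.Icc 1 k, ξ i)))) else 0)
        (ξ j) := by
      apply HasDerivAt.fun_sum
      intro k hk
      rcases Finset.mem_Icc.mp hk with ⟨hk1, hkN⟩
      by_cases hjk : j ≤ k
      · simp only [if_pos hjk]
        have hmemk : j ∈ Finset.Icc 1 k := Finset.mem_Icc.mpr ⟨hj1, hjk⟩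
        have hsum : ∀ t : ℝ, ∑ i ∈ Finset.Icc 1 k, Function.update ξ j t i
            = t + ((∑ i ∈ Finset.Icc 1 k, ξ i) - ξ j) := by
          intro t
          rw [Finset.sum_update_of_mem hmemk]
          congr 1
          rw [Finset.sdiff_singleton_eq_erase, Finset.sum_erase_eq_sub hmemk]
        have hfun : (fun t => p^2 * (1-p)^(k+w-1) * ((w:ℝ)/2) *
              Real.logb 2 (1 + (γ / w) * (B - ∑ i ∈ Finset.Icc 1 k, Function.update ξ j t i)))
            = fun t => (p^2 * (1-p)^(k+w-1) * ((w:ℝ)/2)) *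
              Real.logb 2 ((1 + (γ / w) * (B - ((∑ i ∈ Finset.Icc 1 k, ξ i) - ξ j))) + (-(γ/w)) * t) := by
          funext t
          rw [hsum t]
          congr 2
          ring
        rw [hfun]
        have hDk := hD k hk1 hkN
        have harg : (1 + (γ / w) * (B - ((∑ i ∈ Finset.Icc 1 k, ξ i) - ξ j))) + (-(γ/w)) * ξ j
            = 1 + (γ / w) * (B - ∑ i ∈ Finset.Icc 1 k, ξ i) := by ring
        have hder := logb_affine_deriv (p^2 * (1-p)^(k+w-1) * ((w:ℝ)/2))
          (1 + (γ / w) * (B - ((∑ i ∈ Finset.Icc 1 k, ξ i) - ξ j))) (-(γ/w)) (ξ j)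
          (by rw [harg]; exact hDk)
        refine hder.congr_deriv (Eq.symm ?_)
        rw [harg]
        generalize hDg : 1 + γ / ↑w * (B - ∑ i ∈ Finset.Icc 1 k, ξ i) = D at hDk ⊢
        have hDne : D ≠ 0 := ne_of_gt hDk
        field_simp
      · simp only [if_neg hjk]
        have hfun : (fun t => p^2 * (1-p)^(k+w-1) * ((w:ℝ)/2) *
              Real.logb 2 (1 + (γ / w) * (B - ∑ i ∈ Finset.Icc 1 k, Function.update ξ j t i)))
            = fun _ => p^2 * (1-p)^(k+w-1) * ((w:ℝ)/2) *
              Real.logb 2 (1 + (γ / w) * (B - ∑ i ∈ Finset.Icc 1 k, ξ i)) := by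
          funext t
          have hss : ∑ i ∈ Finset.Icc 1 k, Function.update ξ j t i = ∑ i ∈ Finset.Icc 1 k, ξ i :=
            Finset.sum_congr rfl fun i hi =>
              Function.update_of_ne (by rcases Finset.mem_Icc.mp hi with ⟨_, h2⟩; omega) _ _
          rw [hss]
        rw [hfun]
        exact hasDerivAt_const _ _
    have hfil : (Finset.Icc 1 N).filter (fun k => j ≤ k) = Finset.Icc j N := by
      ext a; simp only [Finset.mem_filter, Finset.mem_Icc]; omega
    rw [← Finset.sum_filter, hfil, Finset.sum_neg_distrib] at h
    exact h
  -- R part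
  have hR : HasDerivAt
      (fun t => p * (1-p)^(w+N) * ((w:ℝ)/2) *
          Real.logb 2 (1 + (γ / w) * (B - ∑ i ∈ Finset.Icc 1 N, Function.update ξ j t i)))
      (-(γ / (2 * Real.log 2) *
          (p * (1-p)^(w+N) / (1 + (γ / w) * (B - ∑ i ∈ Finset.Icc 1 N, ξ i))))) (ξ j) := by
    have hsum : ∀ t : ℝ, ∑ i ∈ Finset.Icc 1 N, Function.update ξ j t i
        = t + ((∑ i ∈ Finset.Icc 1 N, ξ i) - ξ j) := by
      intro t
      rw [Finset.sum_update_of_mem hmemj]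
      congr 1
      rw [Finset.sdiff_singleton_eq_erase, Finset.sum_erase_eq_sub hmemj]
    have hfun : (fun t => p * (1-p)^(w+N) * ((w:ℝ)/2) *
          Real.logb 2 (1 + (γ / w) * (B - ∑ i ∈ Finset.Icc 1 N, Function.update ξ j t i)))
        = fun t => (p * (1-p)^(w+N) * ((w:ℝ)/2)) *
          Real.logb 2 ((1 + (γ / w) * (B - ((∑ i ∈ Finset.Icc 1 N, ξ i) - ξ j))) + (-(γ/w)) * t) := by
      funext t
      rw [hsum t]
      congr 2
      ring
    rw [hfun]
    have hDN := hD N (hj1.trans hjN) le_rfl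
    have harg : (1 + (γ / w) * (B - ((∑ i ∈ Finset.Icc 1 N, ξ i) - ξ j))) + (-(γ/w)) * ξ j
        = 1 + (γ / w) * (B - ∑ i ∈ Finset.Icc 1 N, ξ i) := by ring
    have hder := logb_affine_deriv (p * (1-p)^(w+N) * ((w:ℝ)/2))
      (1 + (γ / w) * (B - ((∑ i ∈ Finset.Icc 1 N, ξ i) - ξ j))) (-(γ/w)) (ξ j)
      (by rw [harg]; exact hDN)
    convert hder using 1
    rw [harg]
    generalize hDg : 1 + γ / ↑w * (B - ∑ i ∈ Finset.Icc 1 N, ξ i) = D at hDN ⊢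
    have hDne : D ≠ 0 := ne_of_gt hDN
    field_simp
  -- combine
  have hC : HasDerivAt
      (fun _ : ℝ => ∑ k ∈ Finset.Icc 1 w, p ^ 2 * (1 - p) ^ (k - 1) * ((k : ℝ) / 2) *
          Real.logb 2 (1 + γ * B / k)) 0 (ξ j) := hasDerivAt_const _ _
  have htot := ((hC.add hP).add hQ).add hR
  have hfe : (fun t => TN B γ p w N (Function.update ξ j t)) = (fun t =>
      (∑ k ∈ Finset.Icc 1 w, p ^ 2 * (1 - p) ^ (k - 1) * ((k : ℝ) / 2) *
          Real.logb 2 (1 + γ * B / k))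
      + (∑ i ∈ Finset.Icc 1 N, p * (1 - p) ^ (i + w - 1) * (1 / 2) *
          Real.logb 2 (1 + γ * Function.update ξ j t i))
      + (∑ k ∈ Finset.Icc 1 N, p ^ 2 * (1 - p) ^ (k + w - 1) * ((w : ℝ) / 2) *
          Real.logb 2 (1 + (γ / w) * (B - ∑ i ∈ Finset.Icc 1 k, Function.update ξ j t i)))
      + p * (1 - p) ^ (w + N) * ((w : ℝ) / 2) *
          Real.logb 2 (1 + (γ / w) * (B - ∑ i ∈ Finset.Icc 1 N, Function.update ξ j t i))) := rfl
  rw [hfe]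
  have hval : γ / (2 * Real.log 2) * Br B γ p w N ξ j =
      0 + γ / (2 * Real.log 2) * (p * (1-p)^(j+w-1) / (1 + γ * ξ j))
      + (-∑ k ∈ Finset.Icc j N, γ / (2 * Real.log 2) *
          (p^2 * (1-p)^(k+w-1) / (1 + (γ / w) * (B - ∑ i ∈ Finset.Icc 1 k, ξ i))))
      + (-(γ / (2 * Real.log 2) *
          (p * (1-p)^(w+N) / (1 + (γ / w) * (B - ∑ i ∈ Finset.Icc 1 N, ξ i))))) := by
    simp only [Br, mul_sub, Finset.mul_sum]
    ring
  rw [hval]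
  exact htot
private lemma deriv_nonneg_of_left {f : ℝ → ℝ} {x G : ℝ} (hd : HasDerivAt f G x)
    (h : ∀ᶠ t in nhdsWithin x (Set.Iio x), f t ≤ f x) : 0 ≤ G := by
  have hs : Filter.Tendsto (slope f x) (nhdsWithin x (Set.Iio x)) (nhds G) :=
    (hasDerivAt_iff_tendsto_slope.mp hd).mono_left
      (nhdsWithin_mono x fun y hy => ne_of_lt hy)
  refine ge_of_tendsto hs ?_
  filter_upwards [h, self_mem_nhdsWithin] with t ht ht'
  have hlt : t < x := ht'
  rw [slope_def_field]
  have := div_nonneg (by linarith : (0:ℝ) ≤ f x - f t) (by linarith : (0:ℝ) ≤ x - t)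
  have he : (f x - f t) / (x - t) = (f t - f x) / (t - x) := by
    rw [← neg_div_neg_eq]; ring_nf
  linarith [he ▸ this]

private lemma deriv_nonpos_of_right {f : ℝ → ℝ} {x G : ℝ} (hd : HasDerivAt f G x)
    (h : ∀ᶠ t in nhdsWithin x (Set.Ioi x), f t ≤ f x) : G ≤ 0 := by
  have hs : Filter.Tendsto (slope f x) (nhdsWithin x (Set.Ioi x)) (nhds G) :=
    (hasDerivAt_iff_tendsto_slope.mp hd).mono_left
      (nhdsWithin_mono x fun y hy => (ne_of_gt hy))
  refine le_of_tendsto hs ?_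
  filter_upwards [h, self_mem_nhdsWithin] with t ht ht'
  have hlt : x < t := ht'
  rw [slope_def_field]
  exact div_nonpos_iff.mpr (Or.inr ⟨by linarith, by linarith⟩)

private lemma geom_aux (p : ℝ) (v j N : ℕ) (hj : j ≤ N) :
    ∑ k ∈ Finset.Icc j N, p^2 * (1-p)^(k+v) + p * (1-p)^(N+v+1) = p * (1-p)^(j+v) := by
  induction N, hj using Nat.le_induction with
  | base => rw [Finset.Icc_self, Finset.sum_singleton]; ring
  | succ N hN ih =>
    rw [Finset.sum_Icc_succ_top (by omega)]
    have e : N + 1 + v = N + v + 1 := by omega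
    rw [e]
    linear_combination ih
private lemma adm_update {B : ℝ} {N : ℕ} {ξ : ℕ → ℝ} (hξ : ξ ∈ adm B N) {j : ℕ}
    (hj1 : 1 ≤ j) (hjN : j ≤ N) {t : ℝ} (ht0 : 0 ≤ t)
    (hts : t ≤ ξ j + (B - ∑ i ∈ Finset.Icc 1 N, ξ i)) :
    Function.update ξ j t ∈ adm B N := by
  obtain ⟨hnn, hz, hs⟩ := hξ
  refine ⟨?_, ?_, ?_⟩
  · intro i h1 h2
    by_cases hij : i = j
    · subst hij; rwa [Function.update_self]
    · rw [Function.update_of_ne hij]; exact hnn i h1 h2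
  · intro i hi
    have hij : i ≠ j := by rcases hi with h | h <;> omega
    rw [Function.update_of_ne hij]; exact hz i hi
  · have hmem : j ∈ Finset.Icc 1 N := Finset.mem_Icc.mpr ⟨hj1, hjN⟩
    rw [Finset.sum_update_of_mem hmem, Finset.sdiff_singleton_eq_erase,
      Finset.sum_erase_eq_sub hmem]
    linarith
/-- The maximizer of `T_N` satisfies the KKT recursion
`(1-p)/(1+γξ_{j+1}) = 1/(1+γξ_j) - p/(1+(γ/w)(B-∑_{i=1}^j ξ_i))` for `j = 1,…,N-1`,
together with the terminal condition `ξ_N = (B-∑_{i=1}^N ξ_i)/w`. -/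
theorem TN_maximizer_recursion (B γ p : ℝ) (w N : ℕ) (hB : 0 < B) (hγ : 0 < γ)
    (hw : 1 ≤ w) (hp : 0 < p) (hp1 : p < 1) (hN : 1 ≤ N) (ξ : ℕ → ℝ)
    (hξ : ξ ∈ adm B N) (hmax : ∀ η ∈ adm B N, TN B γ p w N η ≤ TN B γ p w N ξ) :
    (∀ j, 1 ≤ j → j < N →
      (1 - p) / (1 + γ * ξ (j + 1))
        = 1 / (1 + γ * ξ j)
          - p / (1 + (γ / w) * (B - ∑ i ∈ Finset.Icc 1 j, ξ i)))
    ∧ ξ N = (B - ∑ i ∈ Finset.Icc 1 N, ξ i) / w := by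
  obtain ⟨hnn, hz, hsle⟩ := id hξ
  have hL : (0:ℝ) < Real.log 2 := Real.log_pos (by norm_num)
  have hκ : 0 < γ / (2 * Real.log 2) := by positivity
  have hwR : (0:ℝ) < (w:ℝ) := by exact_mod_cast Nat.pos_of_ne_zero (by omega)
  have h1p : (0:ℝ) < 1 - p := by linarith
  have hSmono : ∀ k, k ≤ N → ∑ i ∈ Finset.Icc 1 k, ξ i ≤ ∑ i ∈ Finset.Icc 1 N, ξ i := by
    intro k hk
    apply Finset.sum_le_sum_of_subset_of_nonneg (Finset.Icc_subset_Icc_right hk)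
    intro i hi _
    exact hnn i (Finset.mem_Icc.mp hi).1 (Finset.mem_Icc.mp hi).2
  have hD : ∀ k, 1 ≤ k → k ≤ N → 0 < 1 + (γ / w) * (B - ∑ i ∈ Finset.Icc 1 k, ξ i) := by
    intro k _ hk
    have h1 : 0 ≤ B - ∑ i ∈ Finset.Icc 1 k, ξ i := by
      have := hSmono k hk; linarith
    have h2 : 0 ≤ (γ / w) * (B - ∑ i ∈ Finset.Icc 1 k, ξ i) :=
      mul_nonneg (by positivity) h1
    linarith
  have hE : ∀ i, 1 ≤ i → i ≤ N → 0 < 1 + γ * ξ i := by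
    intro i h1 h2
    have := mul_nonneg hγ.le (hnn i h1 h2); linarith
  have hDer : ∀ j, 1 ≤ j → j ≤ N →
      HasDerivAt (fun t => TN B γ p w N (Function.update ξ j t))
        (γ / (2 * Real.log 2) * Br B γ p w N ξ j) (ξ j) := fun j h1 h2 =>
    TN_update_hasDerivAt B γ p w N ξ j hγ hw h1 h2 (hE j h1 h2) hD
  have he : ∀ k : ℕ, k + w - 1 = k + (w - 1) := fun k => by omega
  have e1 : w + N = N + (w - 1) + 1 := by omega
  -- Step 1 : total sum is strictly below B
  have hSN : ∑ i ∈ Finset.Icc 1 N, ξ i < B := by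
    rcases lt_or_eq_of_le hsle with h | h
    · exact h
    exfalso
    have hex : ∃ i ∈ Finset.Icc 1 N, 0 < ξ i := by
      by_contra hno
      push_neg at hno
      have h0 : ∑ i ∈ Finset.Icc 1 N, ξ i = 0 :=
        Finset.sum_eq_zero fun i hi => le_antisymm (hno i hi)
          (hnn i (Finset.mem_Icc.mp hi).1 (Finset.mem_Icc.mp hi).2)
      rw [h0] at h; linarith
    set T := (Finset.Icc 1 N).filter (fun i => 0 < ξ i) with hT
    have hTne : T.Nonempty := by
      obtain ⟨i, hi, hposi⟩ := hex
      exact ⟨i, Finset.mem_filter.mpr ⟨hi, hposi⟩⟩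
    set j := T.max' hTne with hjdef
    have hjT : j ∈ T := T.max'_mem hTne
    have hjIcc := Finset.mem_Icc.mp (Finset.mem_filter.mp hjT).1
    have hjpos : 0 < ξ j := (Finset.mem_filter.mp hjT).2
    have hmax' : ∀ i, j < i → i ≤ N → ξ i = 0 := by
      intro i hji hiN
      by_contra hne
      have hipos : 0 < ξ i := lt_of_le_of_ne (hnn i (by omega) hiN) (Ne.symm hne)
      have : i ≤ j := T.le_max' i (Finset.mem_filter.mpr ⟨Finset.mem_Icc.mpr ⟨by omega, hiN⟩, hipos⟩)
      omega
    have hSk : ∀ k, j ≤ k → k ≤ N → ∑ i ∈ Finset.Icc 1 k, ξ i = B := by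
      intro k hjk hkN
      have eI : ∀ m : ℕ, Finset.Icc 1 m = Finset.Ioc 0 m := fun m => Finset.Icc_add_one_left_eq_Ioc 0 m
      have hzero2 : ∑ i ∈ Finset.Ioc k N, ξ i = 0 :=
        Finset.sum_eq_zero fun i hi => by
          rcases Finset.mem_Ioc.mp hi with ⟨h1, h2⟩
          exact hmax' i (by omega) h2
      have hsplit := Finset.sum_Ioc_consecutive ξ (Nat.zero_le k) hkN
      have e2 : ∑ i ∈ Finset.Icc 1 k, ξ i = ∑ i ∈ Finset.Ioc 0 k, ξ i := by rw [eI]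
      have e3 : ∑ i ∈ Finset.Icc 1 N, ξ i = ∑ i ∈ Finset.Ioc 0 N, ξ i := by rw [eI]
      rw [e3] at h
      rw [e2]
      linarith
    have hder := hDer j hjIcc.1 hjIcc.2
    have hGnonneg : 0 ≤ γ / (2 * Real.log 2) * Br B γ p w N ξ j := by
      apply deriv_nonneg_of_left hder
      have h1 : ∀ᶠ t in nhdsWithin (ξ j) (Set.Iio (ξ j)), 0 < t :=
        Filter.Eventually.filter_mono nhdsWithin_le_nhds (eventually_gt_nhds hjpos)
      filter_upwards [h1, self_mem_nhdsWithin] with t ht0 htl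
      have htlt : t < ξ j := htl
      show TN B γ p w N (Function.update ξ j t) ≤ TN B γ p w N (Function.update ξ j (ξ j))
      rw [Function.update_eq_self]
      exact hmax _ (adm_update hξ hjIcc.1 hjIcc.2 ht0.le (by linarith))
    have hBrneg : Br B γ p w N ξ j < 0 := by
      have hsum1 : ∀ k ∈ Finset.Icc j N,
          p^2 * (1-p)^(k+w-1) / (1 + (γ / w) * (B - ∑ i ∈ Finset.Icc 1 k, ξ i))
            = p^2 * (1-p)^(k+(w-1)) := by
        intro k hk
        rcases Finset.mem_Icc.mp hk with ⟨hk1, hk2⟩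
        rw [hSk k hk1 hk2, he k]
        simp
      have hgeom := geom_aux p (w-1) j N hjIcc.2
      have hX : 0 < p * (1-p)^(j+(w-1)) := by positivity
      have hE1 : 1 < 1 + γ * ξ j := by nlinarith
      have hdiv : p * (1-p)^(j+(w-1)) / (1 + γ * ξ j) < p * (1-p)^(j+(w-1)) :=
        div_lt_self hX hE1
      have hlast : (1:ℝ) + (γ / w) * (B - ∑ i ∈ Finset.Icc 1 N, ξ i) = 1 := by
        rw [hSk N hjIcc.2 le_rfl]; ring
      simp only [Br, Finset.sum_congr rfl hsum1, hlast, he j, e1, div_one]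
      linarith
    nlinarith
  -- Step 2 : all coordinates are strictly positive
  have hpos : ∀ i, 1 ≤ i → i ≤ N → 0 < ξ i := by
    intro j hj1 hjN
    rcases (hnn j hj1 hjN).lt_or_eq with h | h
    · exact h
    exfalso
    have hj0 : ξ j = 0 := h.symm
    have hder := hDer j hj1 hjN
    have hGle : γ / (2 * Real.log 2) * Br B γ p w N ξ j ≤ 0 := by
      apply deriv_nonpos_of_right hder
      have h1 : ∀ᶠ t in nhdsWithin (ξ j) (Set.Ioi (ξ j)),
          t < ξ j + (B - ∑ i ∈ Finset.Icc 1 N, ξ i) :=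
        Filter.Eventually.filter_mono nhdsWithin_le_nhds (eventually_lt_nhds (by linarith))
      filter_upwards [h1, self_mem_nhdsWithin] with t htu htl
      have htgt : ξ j < t := htl
      show TN B γ p w N (Function.update ξ j t) ≤ TN B γ p w N (Function.update ξ j (ξ j))
      rw [Function.update_eq_self]
      exact hmax _ (adm_update hξ hj1 hjN (by linarith) htu.le)
    have hBrpos : 0 < Br B γ p w N ξ j := by
      have hterm : ∀ k ∈ Finset.Icc j N,
          p^2 * (1-p)^(k+w-1) / (1 + (γ / w) * (B - ∑ i ∈ Finset.Icc 1 k, ξ i))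
            < p^2 * (1-p)^(k+w-1) := by
        intro k hk
        rcases Finset.mem_Icc.mp hk with ⟨hk1, hk2⟩
        apply div_lt_self (by positivity)
        have h2 : 0 < (γ / w) * (B - ∑ i ∈ Finset.Icc 1 k, ξ i) := by
          have := hSmono k hk2
          exact mul_pos (by positivity) (by linarith)
        linarith
      have hsum : ∑ k ∈ Finset.Icc j N,
          p^2 * (1-p)^(k+w-1) / (1 + (γ / w) * (B - ∑ i ∈ Finset.Icc 1 k, ξ i))
            < ∑ k ∈ Finset.Icc j N, p^2 * (1-p)^(k+w-1) :=
        Finset.sum_lt_sum_of_nonempty ⟨j, Finset.mem_Icc.mpr ⟨le_rfl, hjN⟩⟩ hterm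
      have hdlt : p * (1-p)^(w+N) / (1 + (γ / w) * (B - ∑ i ∈ Finset.Icc 1 N, ξ i))
          < p * (1-p)^(w+N) := by
        apply div_lt_self (by positivity)
        have h2 : 0 < (γ / w) * (B - ∑ i ∈ Finset.Icc 1 N, ξ i) :=
          mul_pos (by positivity) (by linarith)
        linarith
      have hgeom := geom_aux p (w-1) j N hjN
      have hsum2 : ∑ k ∈ Finset.Icc j N, p^2 * (1-p)^(k+w-1)
          = ∑ k ∈ Finset.Icc j N, p^2 * (1-p)^(k+(w-1)) :=
        Finset.sum_congr rfl fun k _ => by rw [he k]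
      have hfirst : p * (1-p)^(j+w-1) / (1 + γ * ξ j) = p * (1-p)^(j+(w-1)) := by
        rw [hj0, he j]; simp
      have hwN : p * (1-p)^(w+N) = p * (1-p)^(N+(w-1)+1) := by rw [e1]
      simp only [Br, hfirst]
      rw [hwN] at hdlt ⊢
      rw [hsum2] at hsum
      linarith
    nlinarith
  -- Step 3 : first-order conditions
  have hBr0 : ∀ j, 1 ≤ j → j ≤ N → Br B γ p w N ξ j = 0 := by
    intro j hj1 hjN
    have hder := hDer j hj1 hjN
    have hmaxloc : IsLocalMax (fun t => TN B γ p w N (Function.update ξ j t)) (ξ j) := by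
      have h1 : ∀ᶠ t in nhds (ξ j), 0 < t := eventually_gt_nhds (hpos j hj1 hjN)
      have h2 : ∀ᶠ t in nhds (ξ j), t < ξ j + (B - ∑ i ∈ Finset.Icc 1 N, ξ i) :=
        eventually_lt_nhds (by linarith)
      filter_upwards [h1, h2] with t ht1 ht2
      show TN B γ p w N (Function.update ξ j t) ≤ TN B γ p w N (Function.update ξ j (ξ j))
      rw [Function.update_eq_self]
      exact hmax _ (adm_update hξ hj1 hjN ht1.le ht2.le)
    have h0 := hmaxloc.hasDerivAt_eq_zero hder
    exact (mul_eq_zero.mp h0).resolve_left (ne_of_gt hκ)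
  constructor
  · intro j hj1 hjN
    have h1 := hBr0 j hj1 (by omega)
    have h2 := hBr0 (j+1) (by omega) (by omega)
    simp only [Br] at h1 h2
    have hins : Finset.Icc j N = insert j (Finset.Icc (j+1) N) := by
      ext a; simp only [Finset.mem_Icc, Finset.mem_insert]; omega
    rw [hins, Finset.sum_insert (by simp)] at h1
    have he2 : j + 1 + w - 1 = (j + w - 1) + 1 := by omega
    rw [he2] at h2
    have hX : p * (1-p)^(j+w-1) ≠ 0 := by positivity
    apply mul_left_cancel₀ hX
    linear_combination h2 - h1
  · have h1 := hBr0 N hN le_rfl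
    simp only [Br] at h1
    rw [Finset.Icc_self, Finset.sum_singleton] at h1
    have he3 : w + N = (N + w - 1) + 1 := by omega
    rw [he3] at h1
    have hX : p * (1-p)^(N+w-1) ≠ 0 := by positivity
    have hEne : (1 + γ * ξ N) ≠ 0 := (hE N hN le_rfl).ne'
    have hDne : (1 + (γ / w) * (B - ∑ i ∈ Finset.Icc 1 N, ξ i)) ≠ 0 := (hD N hN le_rfl).ne'
    have hinv : (1 + γ * ξ N)⁻¹ = (1 + (γ / w) * (B - ∑ i ∈ Finset.Icc 1 N, ξ i))⁻¹ := by
      have hED : p * (1-p)^(N+w-1) * (1 + γ * ξ N)⁻¹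
          = p * (1-p)^(N+w-1) * (1 + (γ / w) * (B - ∑ i ∈ Finset.Icc 1 N, ξ i))⁻¹ := by
        linear_combination h1
      exact mul_left_cancel₀ hX hED
    have hED2 : 1 + γ * ξ N = 1 + (γ / w) * (B - ∑ i ∈ Finset.Icc 1 N, ξ i) :=
      inv_injective hinv
    apply mul_left_cancel₀ (ne_of_gt hγ)
    linear_combination hED2
end

section
/- For each fixed j, the sequence N ↦ ξ_j^{(N)*} (for N ≥ j) is strictly decreasing in N, where (ξ_j^{(N)*})_{j=1}^N is the unique maximizer of T_N. -/
open Real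

noncomputable def Ssum (x : ℕ → ℝ) (k : ℕ) : ℝ := ∑ j ∈ Finset.Icc 1 k, x j

noncomputable def Psi (B γ p : ℝ) (w N : ℕ) (x : ℕ → ℝ) (i : ℕ) : ℝ :=
  (1 - p) ^ i * (1 + γ * x i)⁻¹
  - (∑ k ∈ Finset.Icc 1 N, if i ≤ k then p * (1 - p) ^ k * (1 + γ / w * (B - Ssum x k))⁻¹ else 0)
  - (1 - p) ^ (N + 1) * (1 + γ / w * (B - Ssum x N))⁻¹

lemma logb_affine_hasDerivAt (c a : ℝ) (t0 : ℝ) (h : 0 < a + c * t0) :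
    HasDerivAt (fun t => Real.logb 2 (a + c * t)) (c / ((a + c * t0) * Real.log 2)) t0 := by
  have hf : HasDerivAt (fun t : ℝ => a + c * t) c t0 := by
    simpa using ((hasDerivAt_id t0).const_mul c).const_add a
  have hl := (hf.log (ne_of_gt h))
  have h2 : HasDerivAt (fun t => Real.log (a + c * t) / Real.log 2)
      (c / (a + c * t0) / Real.log 2) t0 := hl.div_const _
  have heq : (fun t => Real.log (a + c * t) / Real.log 2) =
      (fun t => Real.logb 2 (a + c * t)) := by funext t; rfl
  rw [heq] at h2
  convert h2 using 1
  rw [div_div]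

lemma sum_update_Icc (x : ℕ → ℝ) (i : ℕ) (hi : 1 ≤ i) (t : ℝ) (k : ℕ) :
    ∑ j ∈ Finset.Icc 1 k, Function.update x i (x i + t) j
      = Ssum x k + (if i ≤ k then t else 0) := by
  by_cases hik : i ≤ k
  · have hmem : i ∈ Finset.Icc 1 k := Finset.mem_Icc.2 ⟨hi, hik⟩
    rw [Finset.sum_update_of_mem hmem, if_pos hik]
    have : Ssum x k = x i + ∑ j ∈ Finset.Icc 1 k \ {i}, x j := by
      rw [Ssum, ← Finset.sum_erase_add _ _ hmem, Finset.sdiff_singleton_eq_erase]; ring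
    rw [this]; ring
  · rw [if_neg hik, add_zero, Ssum]
    refine Finset.sum_congr rfl fun j hj => ?_
    have : j ≠ i := by
      rcases Finset.mem_Icc.1 hj with ⟨_, h2⟩; omega
    rw [Function.update_of_ne this]

set_option maxHeartbeats 1000000 in
lemma hasDerivAt_TN_update (B γ p : ℝ) (w N : ℕ) (x : ℕ → ℝ) (i : ℕ)
    (hB : 0 < B) (hγ : 0 < γ) (hp : 0 < p) (hp1 : p < 1) (hw : 1 ≤ w)
    (hi : 1 ≤ i) (hiN : i ≤ N) (hxi : 0 ≤ x i)
    (hS : ∀ k, 1 ≤ k → k ≤ N → Ssum x k ≤ B) :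
    HasDerivAt (fun t => TN B γ p w N (Function.update x i (x i + t)))
      ((γ * p * (1 - p) ^ (w - 1) / (2 * Real.log 2)) * Psi B γ p w N x i) 0 := by
  have hwpos : (0:ℝ) < (w:ℝ) := by exact_mod_cast Nat.lt_of_lt_of_le Nat.zero_lt_one hw
  have hlog2 : (0:ℝ) < Real.log 2 := Real.log_pos (by norm_num)
  have hZ : ∀ k, 1 ≤ k → k ≤ N → (0:ℝ) < 1 + γ / w * (B - Ssum x k) := by
    intro k h1 h2
    have h3 : 0 ≤ B - Ssum x k := sub_nonneg.2 (hS k h1 h2)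
    have : 0 ≤ γ / w * (B - Ssum x k) := mul_nonneg (le_of_lt (div_pos hγ hwpos)) h3
    linarith
  have hZi : (0:ℝ) < 1 + γ * x i := by nlinarith
  -- rewrite the function
  have hfun : (fun t => TN B γ p w N (Function.update x i (x i + t)))
      = (fun t =>
        (∑ k ∈ Finset.Icc 1 w, p ^ 2 * (1 - p) ^ (k - 1) * ((k : ℝ) / 2) *
            Real.logb 2 (1 + γ * B / k))
        + (∑ j ∈ Finset.Icc 1 N, p * (1 - p) ^ (j + w - 1) * (1 / 2) *
            Real.logb 2 (1 + γ * Function.update x i (x i + t) j))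
        + (∑ k ∈ Finset.Icc 1 N, p ^ 2 * (1 - p) ^ (k + w - 1) * ((w : ℝ) / 2) *
            Real.logb 2 (1 + (γ / w) * (B - (Ssum x k + if i ≤ k then t else 0))))
        + p * (1 - p) ^ (w + N) * ((w : ℝ) / 2) *
            Real.logb 2 (1 + (γ / w) * (B - (Ssum x N + if i ≤ N then t else 0)))) := by
    funext t
    simp only [TN, sum_update_Icc x i hi t]
  rw [hfun]
  -- second-sum derivatives
  have h2 : HasDerivAt (fun t => ∑ j ∈ Finset.Icc 1 N, p * (1 - p) ^ (j + w - 1) * (1 / 2) *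
      Real.logb 2 (1 + γ * Function.update x i (x i + t) j))
      (∑ j ∈ Finset.Icc 1 N, if j = i then
          p * (1 - p) ^ (i + w - 1) * (1 / 2) * (γ / ((1 + γ * x i) * Real.log 2)) else 0) 0 := by
    apply HasDerivAt.fun_sum
    intro j hj
    by_cases hji : j = i
    · subst hji
      simp only [Function.update_self, if_pos rfl]
      have harg : (fun t : ℝ => p * (1 - p) ^ (j + w - 1) * (1 / 2) *
          Real.logb 2 (1 + γ * (x j + t)))
          = (fun t : ℝ => p * (1 - p) ^ (j + w - 1) * (1 / 2) *
          Real.logb 2 ((1 + γ * x j) + γ * t)) := by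
        funext t
        have : 1 + γ * (x j + t) = (1 + γ * x j) + γ * t := by ring
        rw [this]
      rw [harg]
      have hd := (logb_affine_hasDerivAt γ (1 + γ * x j) 0 (by simpa using hZi)).const_mul
        (p * (1 - p) ^ (j + w - 1) * (1 / 2))
      refine hd.congr_deriv ?_
      simp
    · have : (fun t : ℝ => p * (1 - p) ^ (j + w - 1) * (1 / 2) *
          Real.logb 2 (1 + γ * Function.update x i (x i + t) j))
          = (fun _ : ℝ => p * (1 - p) ^ (j + w - 1) * (1 / 2) *
          Real.logb 2 (1 + γ * x j)) := by
        funext t; rw [Function.update_of_ne hji]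
      rw [this, if_neg hji]
      exact hasDerivAt_const _ _
  -- third-sum derivatives
  have h3 : HasDerivAt (fun t => ∑ k ∈ Finset.Icc 1 N, p ^ 2 * (1 - p) ^ (k + w - 1) * ((w : ℝ) / 2) *
      Real.logb 2 (1 + (γ / w) * (B - (Ssum x k + if i ≤ k then t else 0))))
      (∑ k ∈ Finset.Icc 1 N, if i ≤ k then
        p ^ 2 * (1 - p) ^ (k + w - 1) * ((w : ℝ) / 2) *
          (-(γ / w) / ((1 + γ / w * (B - Ssum x k)) * Real.log 2)) else 0) 0 := by
    apply HasDerivAt.fun_sum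
    intro k hk
    rcases Finset.mem_Icc.1 hk with ⟨hk1, hk2⟩
    by_cases hik : i ≤ k
    · simp only [if_pos hik]
      have harg : (fun t : ℝ => p ^ 2 * (1 - p) ^ (k + w - 1) * ((w : ℝ) / 2) *
          Real.logb 2 (1 + γ / w * (B - (Ssum x k + t))))
          = (fun t : ℝ => p ^ 2 * (1 - p) ^ (k + w - 1) * ((w : ℝ) / 2) *
          Real.logb 2 ((1 + γ / w * (B - Ssum x k)) + (-(γ / w)) * t)) := by
        funext t
        have : 1 + γ / w * (B - (Ssum x k + t)) = (1 + γ / w * (B - Ssum x k)) + (-(γ / w)) * t := by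
          ring
        rw [this]
      rw [harg]
      have hd := (logb_affine_hasDerivAt (-(γ / w)) (1 + γ / w * (B - Ssum x k)) 0
        (by simpa using hZ k hk1 hk2)).const_mul (p ^ 2 * (1 - p) ^ (k + w - 1) * ((w : ℝ) / 2))
      refine hd.congr_deriv ?_
      simp
    · simp only [if_neg hik, add_zero]
      exact hasDerivAt_const _ _
  -- fourth term
  have hN1 : 1 ≤ N := le_trans hi hiN
  have h4 : HasDerivAt (fun t => p * (1 - p) ^ (w + N) * ((w : ℝ) / 2) *
      Real.logb 2 (1 + (γ / w) * (B - (Ssum x N + if i ≤ N then t else 0))))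
      (p * (1 - p) ^ (w + N) * ((w : ℝ) / 2) *
        (-(γ / w) / ((1 + γ / w * (B - Ssum x N)) * Real.log 2))) 0 := by
    simp only [if_pos hiN]
    have harg : (fun t : ℝ => p * (1 - p) ^ (w + N) * ((w : ℝ) / 2) *
        Real.logb 2 (1 + γ / w * (B - (Ssum x N + t))))
        = (fun t : ℝ => p * (1 - p) ^ (w + N) * ((w : ℝ) / 2) *
        Real.logb 2 ((1 + γ / w * (B - Ssum x N)) + (-(γ / w)) * t)) := by
      funext t
      have : 1 + γ / w * (B - (Ssum x N + t)) = (1 + γ / w * (B - Ssum x N)) + (-(γ / w)) * t := by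
        ring
      rw [this]
    rw [harg]
    have hd := (logb_affine_hasDerivAt (-(γ / w)) (1 + γ / w * (B - Ssum x N)) 0
      (by simpa using hZ N hN1 le_rfl)).const_mul (p * (1 - p) ^ (w + N) * ((w : ℝ) / 2))
    refine hd.congr_deriv ?_
    simp
  have htot := ((h2.const_add (∑ k ∈ Finset.Icc 1 w, p ^ 2 * (1 - p) ^ (k - 1) * ((k : ℝ) / 2) *
      Real.logb 2 (1 + γ * B / k))).add h3).add h4
  refine htot.congr_deriv ?_
  symm
  -- now the algebraic identity
  rw [Finset.sum_ite_eq' (Finset.Icc 1 N) i]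
  rw [if_pos (Finset.mem_Icc.2 ⟨hi, hiN⟩)]
  rw [Psi]
  have hne : Real.log 2 ≠ 0 := ne_of_gt hlog2
  have hwne : (w:ℝ) ≠ 0 := ne_of_gt hwpos
  have hZine : (1 + γ * x i) ≠ 0 := ne_of_gt hZi
  have hZNne : (1 + γ / w * (B - Ssum x N)) ≠ 0 := ne_of_gt (hZ N hN1 le_rfl)
  have hpowi : (1 - p) ^ (i + w - 1) = (1 - p) ^ i * (1 - p) ^ (w - 1) := by
    have : i + w - 1 = i + (w - 1) := by omega
    rw [this, pow_add]
  have hpowN : (1 - p) ^ (w + N) = (1 - p) ^ (N + 1) * (1 - p) ^ (w - 1) := by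
    have : w + N = (N + 1) + (w - 1) := by omega
    rw [this, pow_add]
  have hsum : (γ * p * (1 - p) ^ (w - 1) / (2 * Real.log 2)) *
      (∑ k ∈ Finset.Icc 1 N, if i ≤ k then p * (1 - p) ^ k * (1 + γ / w * (B - Ssum x k))⁻¹ else 0)
      = - ∑ k ∈ Finset.Icc 1 N, if i ≤ k then
        p ^ 2 * (1 - p) ^ (k + w - 1) * ((w : ℝ) / 2) *
          (-(γ / w) / ((1 + γ / w * (B - Ssum x k)) * Real.log 2)) else 0 := by
    rw [Finset.mul_sum, ← Finset.sum_neg_distrib]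
    refine Finset.sum_congr rfl fun k hk => ?_
    rcases Finset.mem_Icc.1 hk with ⟨hk1, hk2⟩
    by_cases hik : i ≤ k
    · rw [if_pos hik, if_pos hik]
      have hZk := hZ k hk1 hk2
      have hpowk : (1 - p) ^ (k + w - 1) = (1 - p) ^ k * (1 - p) ^ (w - 1) := by
        have : k + w - 1 = k + (w - 1) := by omega
        rw [this, pow_add]
      rw [hpowk]
      set Z := 1 + γ / ↑w * (B - Ssum x k) with hZdef
      have hZne : Z ≠ 0 := ne_of_gt hZk
      field_simp
    · rw [if_neg hik, if_neg hik, mul_zero, neg_zero]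
  rw [mul_sub, mul_sub, hsum]
  have hA : (γ * p * (1 - p) ^ (w - 1) / (2 * Real.log 2)) * ((1 - p) ^ i * (1 + γ * x i)⁻¹)
      = p * (1 - p) ^ (i + w - 1) * (1 / 2) * (γ / ((1 + γ * x i) * Real.log 2)) := by
    rw [hpowi]
    set Z := 1 + γ * x i
    field_simp
  have hE : (γ * p * (1 - p) ^ (w - 1) / (2 * Real.log 2)) *
      ((1 - p) ^ (N + 1) * (1 + γ / ↑w * (B - Ssum x N))⁻¹)
      = -(p * (1 - p) ^ (w + N) * ((w : ℝ) / 2) *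
        (-(γ / ↑w) / ((1 + γ / ↑w * (B - Ssum x N)) * Real.log 2))) := by
    rw [hpowN]
    set Z := 1 + γ / ↑w * (B - Ssum x N)
    field_simp
  linear_combination hA - hE

lemma deriv_nonpos_of_right_max {φ : ℝ → ℝ} {d a : ℝ} (h : HasDerivAt φ d a)
    (hm : ∀ᶠ t in nhdsWithin a (Set.Ioi a), φ t ≤ φ a) : d ≤ 0 := by
  have h1 : HasDerivWithinAt φ d (Set.Ioi a) a := h.hasDerivWithinAt
  rw [hasDerivWithinAt_iff_tendsto_slope] at h1
  have hs : Set.Ioi a \ {a} = Set.Ioi a := by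
    ext t; exact ⟨fun ht => ht.1, fun ht => ⟨ht, ne_of_gt ht⟩⟩
  rw [hs] at h1
  refine le_of_tendsto h1 ?_
  filter_upwards [hm, self_mem_nhdsWithin] with t ht ht'
  have h2 : (0:ℝ) < t - a := sub_pos.2 ht'
  rw [slope_def_field, div_nonpos_iff]
  right; exact ⟨by linarith, le_of_lt h2⟩

lemma deriv_nonneg_of_left_max {φ : ℝ → ℝ} {d a : ℝ} (h : HasDerivAt φ d a)
    (hm : ∀ᶠ t in nhdsWithin a (Set.Iio a), φ t ≤ φ a) : 0 ≤ d := by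
  have h1 : HasDerivWithinAt φ d (Set.Iio a) a := h.hasDerivWithinAt
  rw [hasDerivWithinAt_iff_tendsto_slope] at h1
  have hs : Set.Iio a \ {a} = Set.Iio a := by
    ext t; exact ⟨fun ht => ht.1, fun ht => ⟨ht, ne_of_lt ht⟩⟩
  rw [hs] at h1
  refine ge_of_tendsto h1 ?_
  filter_upwards [hm, self_mem_nhdsWithin] with t ht ht'
  have h2 : t - a < 0 := sub_neg.2 ht'
  rw [slope_def_field, div_nonneg_iff]
  right; exact ⟨by linarith, le_of_lt h2⟩

lemma geom_sum_Icc (p : ℝ) (i N : ℕ) (h : i ≤ N) :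
    ∑ k ∈ Finset.Icc i N, p * (1-p)^k = (1-p)^i - (1-p)^(N+1) := by
  induction N, h using Nat.le_induction with
  | base => simp [Finset.Icc_self]; ring
  | succ n hn ih => rw [Finset.sum_Icc_succ_top (by omega), ih]; ring

lemma sum_ite_le_eq_Icc (i N : ℕ) (f : ℕ → ℝ) (hi : 1 ≤ i) :
    (∑ k ∈ Finset.Icc 1 N, if i ≤ k then f k else 0) = ∑ k ∈ Finset.Icc i N, f k := by
  rw [← Finset.sum_filter]
  congr 1
  ext a
  simp only [Finset.mem_filter, Finset.mem_Icc]
  omega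

/-- Sign of `Psi` when `x i > 0` (inward perturbation). -/
lemma Psi_nonneg_of_max (B γ p : ℝ) (w N : ℕ) (x : ℕ → ℝ) (i : ℕ)
    (hB : 0 < B) (hγ : 0 < γ) (hp : 0 < p) (hp1 : p < 1) (hw : 1 ≤ w)
    (hi : 1 ≤ i) (hiN : i ≤ N) (hx : x ∈ adm B N)
    (hmax : ∀ η ∈ adm B N, TN B γ p w N η ≤ TN B γ p w N x)
    (hxi : 0 < x i) : 0 ≤ Psi B γ p w N x i := by
  obtain ⟨hnn, hz, hsum⟩ := hx
  have hS : ∀ k, 1 ≤ k → k ≤ N → Ssum x k ≤ B := by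
    intro k h1 h2
    refine le_trans ?_ hsum
    exact Finset.sum_le_sum_of_subset_of_nonneg (Finset.Icc_subset_Icc_right h2)
      (fun j hj _ => hnn j (Finset.mem_Icc.1 hj).1 (Finset.mem_Icc.1 hj).2)
  have hd := hasDerivAt_TN_update B γ p w N x i hB hγ hp hp1 hw hi hiN (le_of_lt hxi) hS
  have hfeas : ∀ᶠ t in nhdsWithin (0:ℝ) (Set.Iio 0),
      TN B γ p w N (Function.update x i (x i + t)) ≤ TN B γ p w N (Function.update x i (x i + 0)) := by
    have hmem : Set.Ioo (-(x i)) (0:ℝ) ∈ nhdsWithin (0:ℝ) (Set.Iio 0) := by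
      apply Ioo_mem_nhdsLT_of_mem
      constructor <;> simp [hxi]
    filter_upwards [hmem] with t ht
    have h0 : Function.update x i (x i + 0) = x := by
      rw [add_zero, Function.update_eq_self]
    rw [h0]
    apply hmax
    refine ⟨?_, ?_, ?_⟩
    · intro j h1 h2
      by_cases hji : j = i
      · subst hji; rw [Function.update_self]; have := ht.1; linarith
      · rw [Function.update_of_ne hji]; exact hnn j h1 h2
    · intro j hj
      have hji : j ≠ i := by rcases hj with h | h <;> omega
      rw [Function.update_of_ne hji]; exact hz j hj
    · have := sum_update_Icc x i hi t N
      rw [this, if_pos hiN]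
      have := ht.2
      have hSN : Ssum x N ≤ B := hS N (le_trans hi hiN) le_rfl
      simp only [Ssum] at hSN ⊢
      linarith
  have := deriv_nonneg_of_left_max hd hfeas
  have hc0 : (0:ℝ) < γ * p * (1 - p) ^ (w - 1) / (2 * Real.log 2) := by
    apply div_pos
    · apply mul_pos (mul_pos hγ hp) (pow_pos (by linarith) _)
    · have := Real.log_pos (show (1:ℝ) < 2 by norm_num); linarith
  nlinarith

/-- Sign of `Psi` when there is budget slack (outward perturbation). -/
lemma Psi_nonpos_of_max (B γ p : ℝ) (w N : ℕ) (x : ℕ → ℝ) (i : ℕ)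
    (hB : 0 < B) (hγ : 0 < γ) (hp : 0 < p) (hp1 : p < 1) (hw : 1 ≤ w)
    (hi : 1 ≤ i) (hiN : i ≤ N) (hx : x ∈ adm B N)
    (hmax : ∀ η ∈ adm B N, TN B γ p w N η ≤ TN B γ p w N x)
    (hslack : Ssum x N < B) : Psi B γ p w N x i ≤ 0 := by
  obtain ⟨hnn, hz, hsum⟩ := hx
  have hS : ∀ k, 1 ≤ k → k ≤ N → Ssum x k ≤ B := by
    intro k h1 h2
    refine le_trans ?_ hsum
    exact Finset.sum_le_sum_of_subset_of_nonneg (Finset.Icc_subset_Icc_right h2)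
      (fun j hj _ => hnn j (Finset.mem_Icc.1 hj).1 (Finset.mem_Icc.1 hj).2)
  have hxi : 0 ≤ x i := hnn i hi hiN
  have hd := hasDerivAt_TN_update B γ p w N x i hB hγ hp hp1 hw hi hiN hxi hS
  have hfeas : ∀ᶠ t in nhdsWithin (0:ℝ) (Set.Ioi 0),
      TN B γ p w N (Function.update x i (x i + t)) ≤ TN B γ p w N (Function.update x i (x i + 0)) := by
    have hmem : Set.Ioo (0:ℝ) (B - Ssum x N) ∈ nhdsWithin (0:ℝ) (Set.Ioi 0) := by
      apply Ioo_mem_nhdsGT_of_mem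
      constructor
      · exact le_rfl
      · linarith
    filter_upwards [hmem] with t ht
    have h0 : Function.update x i (x i + 0) = x := by
      rw [add_zero, Function.update_eq_self]
    rw [h0]
    apply hmax
    refine ⟨?_, ?_, ?_⟩
    · intro j h1 h2
      by_cases hji : j = i
      · subst hji; rw [Function.update_self]; have := ht.1; linarith
      · rw [Function.update_of_ne hji]; exact hnn j h1 h2
    · intro j hj
      have hji : j ≠ i := by rcases hj with h | h <;> omega
      rw [Function.update_of_ne hji]; exact hz j hj
    · have := sum_update_Icc x i hi t N
      rw [this, if_pos hiN]
      have := ht.2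
      simp only [Ssum] at this ⊢
      linarith
  have := deriv_nonpos_of_right_max hd hfeas
  have hc0 : (0:ℝ) < γ * p * (1 - p) ^ (w - 1) / (2 * Real.log 2) := by
    apply div_pos
    · apply mul_pos (mul_pos hγ hp) (pow_pos (by linarith) _)
    · have := Real.log_pos (show (1:ℝ) < 2 by norm_num); linarith
  nlinarith

lemma opt_slack (B γ p : ℝ) (w N : ℕ) (x : ℕ → ℝ)
    (hB : 0 < B) (hγ : 0 < γ) (hp : 0 < p) (hp1 : p < 1) (hw : 1 ≤ w) (hN : 1 ≤ N)
    (hx : x ∈ adm B N) (hmax : ∀ η ∈ adm B N, TN B γ p w N η ≤ TN B γ p w N x) :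
    Ssum x N < B := by
  obtain ⟨hnn, hz, hsum⟩ := hx
  rcases lt_or_eq_of_le hsum with h | h
  · exact h
  -- full spend: contradiction
  exfalso
  have hwpos : (0:ℝ) < (w:ℝ) := by exact_mod_cast Nat.lt_of_lt_of_le Nat.zero_lt_one hw
  -- there is a positive coordinate
  have hex : ∃ i ∈ Finset.Icc 1 N, 0 < x i := by
    by_contra hcon
    push_neg at hcon
    have : Ssum x N = 0 := by
      simp only [Ssum]
      refine Finset.sum_eq_zero fun j hj => ?_
      rcases Finset.mem_Icc.1 hj with ⟨h1, h2⟩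
      exact le_antisymm (hcon j (Finset.mem_Icc.2 ⟨h1, h2⟩)) (hnn j h1 h2)
    simp only [Ssum] at h this; rw [this] at h; linarith
  set F := (Finset.Icc 1 N).filter (fun i => 0 < x i) with hF
  have hFne : F.Nonempty := by
    obtain ⟨i, hi1, hi2⟩ := hex
    exact ⟨i, Finset.mem_filter.2 ⟨hi1, hi2⟩⟩
  set i := F.max' hFne with hidef
  have hiF : i ∈ F := F.max'_mem hFne
  have hi1 : 1 ≤ i := (Finset.mem_Icc.1 (Finset.mem_filter.1 hiF).1).1
  have hiN : i ≤ N := (Finset.mem_Icc.1 (Finset.mem_filter.1 hiF).1).2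
  have hxi : 0 < x i := (Finset.mem_filter.1 hiF).2
  -- all coordinates after i vanish
  have hafter : ∀ j, i < j → j ≤ N → x j = 0 := by
    intro j h1 h2
    by_contra hcon
    have hxj : 0 < x j := lt_of_le_of_ne (hnn j (by omega) h2) (Ne.symm hcon)
    have : j ∈ F := Finset.mem_filter.2 ⟨Finset.mem_Icc.2 ⟨by omega, h2⟩, hxj⟩
    have := F.le_max' j this
    omega
  -- partial sums are full for k ≥ i
  have hfull : ∀ k, i ≤ k → k ≤ N → Ssum x k = B := by
    intro k h1 h2
    have hsplit : Ssum x k + ∑ j ∈ Finset.Ioc k N, x j = Ssum x N := by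
      have e1 : Finset.Icc 1 k = Finset.Ioc 0 k := Finset.Icc_add_one_left_eq_Ioc 0 k
      have e2 : Finset.Icc 1 N = Finset.Ioc 0 N := Finset.Icc_add_one_left_eq_Ioc 0 N
      simp only [Ssum, e1, e2]
      exact Finset.sum_Ioc_consecutive x (Nat.zero_le k) h2
    have hzero : ∑ j ∈ Finset.Ioc k N, x j = 0 := by
      refine Finset.sum_eq_zero fun j hj => ?_
      rcases Finset.mem_Ioc.1 hj with ⟨ha, hb⟩
      exact hafter j (by omega) hb
    simp only [Ssum] at h hsplit ⊢
    linarith [hsplit, hzero]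
  -- Psi i is negative
  have hPsi := Psi_nonneg_of_max B γ p w N x i hB hγ hp hp1 hw hi1 hiN ⟨hnn, hz, hsum⟩ hmax hxi
  have hcompute : Psi B γ p w N x i = (1-p)^i * ((1 + γ * x i)⁻¹ - 1) := by
    rw [Psi]
    have h1 : ∀ k ∈ Finset.Icc 1 N, (if i ≤ k then p * (1 - p) ^ k * (1 + γ / w * (B - Ssum x k))⁻¹ else 0)
        = (if i ≤ k then p * (1 - p) ^ k else 0) := by
      intro k hk
      rcases Finset.mem_Icc.1 hk with ⟨hk1, hk2⟩
      by_cases hik : i ≤ k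
      · rw [if_pos hik, if_pos hik, hfull k hik hk2]
        simp
      · rw [if_neg hik, if_neg hik]
    rw [Finset.sum_congr rfl h1, sum_ite_le_eq_Icc i N _ hi1, geom_sum_Icc p i N hiN,
      hfull N hiN le_rfl]
    simp
    ring
  have hneg : (1 + γ * x i)⁻¹ < 1 := by
    rw [inv_lt_one_iff₀]
    right; nlinarith
  have hpow : (0:ℝ) < (1-p)^i := pow_pos (by linarith) i
  nlinarith [hPsi, hcompute]

lemma opt_pos (B γ p : ℝ) (w N : ℕ) (x : ℕ → ℝ)
    (hB : 0 < B) (hγ : 0 < γ) (hp : 0 < p) (hp1 : p < 1) (hw : 1 ≤ w) (hN : 1 ≤ N)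
    (hx : x ∈ adm B N) (hmax : ∀ η ∈ adm B N, TN B γ p w N η ≤ TN B γ p w N x) :
    ∀ i, 1 ≤ i → i ≤ N → 0 < x i := by
  intro i hi1 hiN
  obtain ⟨hnn, hz, hsum⟩ := hx
  have hslack := opt_slack B γ p w N x hB hγ hp hp1 hw hN ⟨hnn, hz, hsum⟩ hmax
  by_contra hcon
  have hxi : x i = 0 := le_antisymm (not_lt.1 hcon) (hnn i hi1 hiN)
  have hwpos : (0:ℝ) < (w:ℝ) := by exact_mod_cast Nat.lt_of_lt_of_le Nat.zero_lt_one hw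
  have hS : ∀ k, 1 ≤ k → k ≤ N → Ssum x k ≤ B := by
    intro k h1 h2
    refine le_trans ?_ hsum
    exact Finset.sum_le_sum_of_subset_of_nonneg (Finset.Icc_subset_Icc_right h2)
      (fun j hj _ => hnn j (Finset.mem_Icc.1 hj).1 (Finset.mem_Icc.1 hj).2)
  have hPsi := Psi_nonpos_of_max B γ p w N x i hB hγ hp hp1 hw hi1 hiN ⟨hnn, hz, hsum⟩ hmax hslack
  -- but Psi i > 0
  have hsumle : (∑ k ∈ Finset.Icc 1 N, if i ≤ k then p * (1 - p) ^ k * (1 + γ / w * (B - Ssum x k))⁻¹ else 0)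
      ≤ (1-p)^i - (1-p)^(N+1) := by
    rw [← geom_sum_Icc p i N hiN, ← sum_ite_le_eq_Icc i N _ hi1]
    refine Finset.sum_le_sum fun k hk => ?_
    rcases Finset.mem_Icc.1 hk with ⟨hk1, hk2⟩
    by_cases hik : i ≤ k
    · rw [if_pos hik, if_pos hik]
      have hZ : (1:ℝ) ≤ 1 + γ / w * (B - Ssum x k) := by
        have h3 : 0 ≤ B - Ssum x k := sub_nonneg.2 (hS k hk1 hk2)
        nlinarith [div_pos hγ hwpos]
      have hinv : (1 + γ / w * (B - Ssum x k))⁻¹ ≤ 1 := by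
        rw [inv_le_one_iff₀]; right; exact hZ
      have hc : 0 ≤ p * (1-p)^k := mul_nonneg (le_of_lt hp) (pow_nonneg (by linarith) k)
      nlinarith
    · rw [if_neg hik, if_neg hik]
  have hterm : (1-p)^(N+1) * (1 + γ / w * (B - Ssum x N))⁻¹ < (1-p)^(N+1) := by
    have hZ : (1:ℝ) < 1 + γ / w * (B - Ssum x N) := by
      have h3 : 0 < B - Ssum x N := sub_pos.2 hslack
      nlinarith [div_pos hγ hwpos]
    have hinv : (1 + γ / w * (B - Ssum x N))⁻¹ < 1 := by
      rw [inv_lt_one_iff₀]; right; exact hZ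
    have hc : (0:ℝ) < (1-p)^(N+1) := pow_pos (by linarith) _
    nlinarith
  rw [Psi, hxi] at hPsi
  simp only [mul_zero, add_zero, inv_one, mul_one] at hPsi
  linarith

lemma opt_Psi_zero (B γ p : ℝ) (w N : ℕ) (x : ℕ → ℝ)
    (hB : 0 < B) (hγ : 0 < γ) (hp : 0 < p) (hp1 : p < 1) (hw : 1 ≤ w) (hN : 1 ≤ N)
    (hx : x ∈ adm B N) (hmax : ∀ η ∈ adm B N, TN B γ p w N η ≤ TN B γ p w N x) :
    ∀ i, 1 ≤ i → i ≤ N → Psi B γ p w N x i = 0 := by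
  intro i hi1 hiN
  have hslack := opt_slack B γ p w N x hB hγ hp hp1 hw hN hx hmax
  have hpos := opt_pos B γ p w N x hB hγ hp hp1 hw hN hx hmax i hi1 hiN
  exact le_antisymm
    (Psi_nonpos_of_max B γ p w N x i hB hγ hp hp1 hw hi1 hiN hx hmax hslack)
    (Psi_nonneg_of_max B γ p w N x i hB hγ hp hp1 hw hi1 hiN hx hmax hpos)

/-- The full set of optimality properties. -/
lemma opt_props (B γ p : ℝ) (w N : ℕ) (x : ℕ → ℝ)
    (hB : 0 < B) (hγ : 0 < γ) (hp : 0 < p) (hp1 : p < 1) (hw : 1 ≤ w) (hN : 1 ≤ N)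
    (hx : x ∈ adm B N) (hmax : ∀ η ∈ adm B N, TN B γ p w N η ≤ TN B γ p w N x) :
    (∀ i, 1 ≤ i → i ≤ N → 0 < x i) ∧ Ssum x N < B ∧
    (∀ i, 1 ≤ i → i < N →
      (1 + γ * x i)⁻¹ = (1-p) * (1 + γ * x (i+1))⁻¹ + p * (1 + (γ/w) * (B - Ssum x i))⁻¹) ∧
    (1 + γ * x N)⁻¹ = (1 + (γ/w) * (B - Ssum x N))⁻¹ := by
  have hpos := opt_pos B γ p w N x hB hγ hp hp1 hw hN hx hmax
  have hslack := opt_slack B γ p w N x hB hγ hp hp1 hw hN hx hmax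
  have hzero := opt_Psi_zero B γ p w N x hB hγ hp hp1 hw hN hx hmax
  have hple : (0:ℝ) < 1 - p := by linarith
  refine ⟨hpos, hslack, ?_, ?_⟩
  · -- Euler equations
    intro i hi1 hiN
    have h1 := hzero i hi1 (le_of_lt hiN)
    have h2 := hzero (i+1) (by omega) hiN
    rw [Psi] at h1 h2
    -- difference of the two sums is the i-th term
    have hdiff : (∑ k ∈ Finset.Icc 1 N, if i ≤ k then p * (1 - p) ^ k * (1 + γ / w * (B - Ssum x k))⁻¹ else 0)
        - (∑ k ∈ Finset.Icc 1 N, if i + 1 ≤ k then p * (1 - p) ^ k * (1 + γ / w * (B - Ssum x k))⁻¹ else 0)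
        = p * (1 - p) ^ i * (1 + γ / w * (B - Ssum x i))⁻¹ := by
      rw [← Finset.sum_sub_distrib]
      have : ∀ k ∈ Finset.Icc 1 N,
          ((if i ≤ k then p * (1 - p) ^ k * (1 + γ / w * (B - Ssum x k))⁻¹ else 0)
           - (if i + 1 ≤ k then p * (1 - p) ^ k * (1 + γ / w * (B - Ssum x k))⁻¹ else 0))
          = (if k = i then p * (1 - p) ^ k * (1 + γ / w * (B - Ssum x k))⁻¹ else 0) := by
        intro k hk
        by_cases hki : k = i
        · subst hki
          rw [if_pos le_rfl, if_neg (by omega), if_pos rfl, sub_zero]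
        · by_cases hik : i ≤ k
          · rw [if_pos hik, if_pos (by omega), if_neg hki, sub_self]
          · rw [if_neg hik, if_neg (by omega), if_neg hki, sub_self]
      rw [Finset.sum_congr rfl this, Finset.sum_ite_eq' (Finset.Icc 1 N) i,
        if_pos (Finset.mem_Icc.2 ⟨hi1, le_of_lt hiN⟩)]
    have hkey : (1-p)^i * (1 + γ * x i)⁻¹ - (1-p)^(i+1) * (1 + γ * x (i+1))⁻¹
        - p * (1-p)^i * (1 + γ / w * (B - Ssum x i))⁻¹ = 0 := by
      have := sub_eq_zero.2 (h1.trans h2.symm)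
      linarith [hdiff, this]
    have hpow : (0:ℝ) < (1-p)^i := pow_pos hple i
    have : (1-p)^i * ((1 + γ * x i)⁻¹ - (1-p) * (1 + γ * x (i+1))⁻¹
        - p * (1 + γ / w * (B - Ssum x i))⁻¹) = 0 := by
      rw [pow_succ] at hkey
      ring_nf
      ring_nf at hkey
      linarith
    have h3 := (mul_eq_zero.1 this).resolve_left (ne_of_gt hpow)
    linarith
  · -- terminal
    have h1 := hzero N hN le_rfl
    rw [Psi] at h1
    have hsum1 : (∑ k ∈ Finset.Icc 1 N, if N ≤ k then p * (1 - p) ^ k * (1 + γ / w * (B - Ssum x k))⁻¹ else 0)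
        = p * (1 - p) ^ N * (1 + γ / w * (B - Ssum x N))⁻¹ := by
      rw [sum_ite_le_eq_Icc N N _ hN, Finset.Icc_self, Finset.sum_singleton]
    rw [hsum1] at h1
    have hpow : (0:ℝ) < (1-p)^N := pow_pos hple N
    have : (1-p)^N * ((1 + γ * x N)⁻¹ - (1 + γ / w * (B - Ssum x N))⁻¹) = 0 := by
      rw [pow_succ] at h1
      ring_nf
      ring_nf at h1
      linarith
    have h3 := (mul_eq_zero.1 this).resolve_left (ne_of_gt hpow)
    linarith

lemma Ssum_succ (z : ℕ → ℝ) (i : ℕ) : Ssum z (i+1) = Ssum z i + z (i+1) := by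
  simp only [Ssum]
  exact Finset.sum_Icc_succ_top (by omega) z

lemma Ssum_one (z : ℕ → ℝ) : Ssum z 1 = z 1 := by
  simp [Ssum]

set_option maxHeartbeats 1600000 in
/-- For each fixed `j`, the sequence `N ↦ ξ_j^{(N)*}` (over horizons `N ≥ j`) is
strictly decreasing in `N`: if `ξN` maximizes `T_N` and `ξM` maximizes `T_M` with
`j ≤ N < M`, then `ξM_j < ξN_j`. -/
theorem TN_maximizer_decreasing_in_N (B γ p : ℝ) (w : ℕ) (hB : 0 < B) (hγ : 0 < γ)
    (hw : 1 ≤ w) (hp : 0 < p) (hp1 : p < 1) (j N M : ℕ) (hj : 1 ≤ j) (hjN : j ≤ N)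
    (hNM : N < M) (ξN ξM : ℕ → ℝ)
    (hξN : ξN ∈ adm B N) (hmaxN : ∀ η ∈ adm B N, TN B γ p w N η ≤ TN B γ p w N ξN)
    (hξM : ξM ∈ adm B M) (hmaxM : ∀ η ∈ adm B M, TN B γ p w M η ≤ TN B γ p w M ξM) :
    ξM j < ξN j := by
  have hN1 : 1 ≤ N := le_trans hj hjN
  have hM1 : 1 ≤ M := by omega
  have hple : (0:ℝ) < 1 - p := by linarith
  have hwpos : (0:ℝ) < (w:ℝ) := by exact_mod_cast Nat.lt_of_lt_of_le Nat.zero_lt_one hw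
  obtain ⟨hposx, hslackx, hEulx, htermx⟩ :=
    opt_props B γ p w N ξN hB hγ hp hp1 hw hN1 hξN hmaxN
  obtain ⟨hposy, hslacky, hEuly, htermy⟩ :=
    opt_props B γ p w M ξM hB hγ hp hp1 hw hM1 hξM hmaxM
  set x := ξN
  set y := ξM
  -- positivity of denominators
  have hqx : ∀ i, 1 ≤ i → i ≤ N → (0:ℝ) < 1 + γ * x i := by
    intro i h1 h2; nlinarith [hposx i h1 h2]
  have hqy : ∀ i, 1 ≤ i → i ≤ M → (0:ℝ) < 1 + γ * y i := by
    intro i h1 h2; nlinarith [hposy i h1 h2]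
  have hSx : ∀ k, 1 ≤ k → k ≤ N → Ssum x k ≤ B := by
    intro k h1 h2
    refine le_trans ?_ hξN.2.2
    exact Finset.sum_le_sum_of_subset_of_nonneg (Finset.Icc_subset_Icc_right h2)
      (fun i hi _ => hξN.1 i (Finset.mem_Icc.1 hi).1 (Finset.mem_Icc.1 hi).2)
  have hSy : ∀ k, 1 ≤ k → k ≤ M → Ssum y k ≤ B := by
    intro k h1 h2
    refine le_trans ?_ hξM.2.2
    exact Finset.sum_le_sum_of_subset_of_nonneg (Finset.Icc_subset_Icc_right h2)
      (fun i hi _ => hξM.1 i (Finset.mem_Icc.1 hi).1 (Finset.mem_Icc.1 hi).2)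
  have hZx : ∀ k, 1 ≤ k → k ≤ N → (0:ℝ) < 1 + γ / w * (B - Ssum x k) := by
    intro k h1 h2
    have := hSx k h1 h2
    nlinarith [div_pos hγ hwpos]
  have hZy : ∀ k, 1 ≤ k → k ≤ M → (0:ℝ) < 1 + γ / w * (B - Ssum y k) := by
    intro k h1 h2
    have := hSy k h1 h2
    nlinarith [div_pos hγ hwpos]
  -- h-values strictly increase for y
  have hymono : ∀ i, 1 ≤ i → i < M →
      (1 + γ / w * (B - Ssum y i))⁻¹ < (1 + γ / w * (B - Ssum y (i+1)))⁻¹ := by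
    intro i h1 h2
    have hy1 : 0 < y (i+1) := hposy (i+1) (by omega) (by omega)
    have hss : Ssum y i < Ssum y (i+1) := by rw [Ssum_succ]; linarith
    have hz1 := hZy i h1 (by omega)
    have hz2 := hZy (i+1) (by omega) h2
    rw [inv_lt_inv₀ hz1 hz2]
    have : γ / w * (B - Ssum y (i+1)) < γ / w * (B - Ssum y i) := by
      apply mul_lt_mul_of_pos_left _ (div_pos hγ hwpos)
      linarith
    linarith
  -- interior strict inequality for y:  u_i > h_i  for i < M
  have hinterior_weak : ∀ d i, 1 ≤ i → i + d = M →
      (1 + γ / w * (B - Ssum y i))⁻¹ ≤ (1 + γ * y i)⁻¹ := by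
    intro d
    induction d with
    | zero =>
      intro i h1 h2
      have : i = M := by omega
      subst this
      rw [htermy]
    | succ n ih =>
      intro i h1 h2
      have hiM : i < M := by omega
      have hihy := ih (i+1) (by omega) (by omega)
      have hEul := hEuly i h1 hiM
      have hmono := hymono i h1 hiM
      rw [hEul]
      have h7 := mul_le_mul_of_nonneg_left hihy (le_of_lt hple)
      nlinarith [hmono]
  have hinterior : ∀ i, 1 ≤ i → i < M →
      (1 + γ / w * (B - Ssum y i))⁻¹ < (1 + γ * y i)⁻¹ := by
    intro i h1 h2
    have hihy := hinterior_weak (M - (i+1)) (i+1) (by omega) (by omega)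
    have hEul := hEuly i h1 h2
    have hmono := hymono i h1 h2
    rw [hEul]
    have h7 := mul_le_mul_of_nonneg_left hihy (le_of_lt hple)
    nlinarith [hmono]
  -- Step 1: y 1 < x 1
  have hstep1 : y 1 < x 1 := by
    by_contra hcon
    push_neg at hcon  -- x 1 ≤ y 1
    have hclaim : ∀ i, 1 ≤ i → i ≤ N → x i ≤ y i ∧ Ssum x i ≤ Ssum y i := by
      intro i hi1
      induction i, hi1 using Nat.le_induction with
      | base =>
        intro _
        exact ⟨hcon, by rw [Ssum_one, Ssum_one]; exact hcon⟩
      | succ i hi ih =>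
        intro hiN
        obtain ⟨hxy, hSS⟩ := ih (by omega)
        have hiN' : i < N := by omega
        have hiM : i < M := by omega
        -- u x i ≥ u y i
        have hu : (1 + γ * y i)⁻¹ ≤ (1 + γ * x i)⁻¹ := by
          rw [inv_le_inv₀ (hqy i hi (by omega)) (hqx i hi (by omega))]
          have := mul_le_mul_of_nonneg_left hxy (le_of_lt hγ)
          linarith
        -- h x i ≤ h y i
        have hh : (1 + γ / w * (B - Ssum x i))⁻¹ ≤ (1 + γ / w * (B - Ssum y i))⁻¹ := by
          rw [inv_le_inv₀ (hZx i hi (by omega)) (hZy i hi (by omega))]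
          have : γ / w * (B - Ssum y i) ≤ γ / w * (B - Ssum x i) := by
            apply mul_le_mul_of_nonneg_left _ (le_of_lt (div_pos hγ hwpos))
            linarith
          linarith
        have hEx := hEulx i hi hiN'
        have hEy := hEuly i hi hiM
        have hph : p * (1 + γ / w * (B - Ssum x i))⁻¹ ≤ p * (1 + γ / w * (B - Ssum y i))⁻¹ :=
          mul_le_mul_of_nonneg_left hh (le_of_lt hp)
        have hu' : (1 + γ * y (i+1))⁻¹ ≤ (1 + γ * x (i+1))⁻¹ := by
          have h5 : (1-p) * (1 + γ * y (i+1))⁻¹ ≤ (1-p) * (1 + γ * x (i+1))⁻¹ := by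
            linarith [hEx, hEy]
          exact le_of_mul_le_mul_left h5 hple
        have hxy' : x (i+1) ≤ y (i+1) := by
          rw [inv_le_inv₀ (hqy (i+1) (by omega) (by omega)) (hqx (i+1) (by omega) (by omega))] at hu'
          have h6 : γ * x (i+1) ≤ γ * y (i+1) := by linarith
          exact le_of_mul_le_mul_left h6 hγ
        refine ⟨hxy', ?_⟩
        rw [Ssum_succ, Ssum_succ]
        linarith
    obtain ⟨hxyN, hSSN⟩ := hclaim N hN1 le_rfl
    -- contradiction at i = N
    have huN : (1 + γ * y N)⁻¹ ≤ (1 + γ * x N)⁻¹ := by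
      rw [inv_le_inv₀ (hqy N hN1 (by omega)) (hqx N hN1 le_rfl)]
      have := mul_le_mul_of_nonneg_left hxyN (le_of_lt hγ)
      linarith
    have hhN : (1 + γ / w * (B - Ssum x N))⁻¹ ≤ (1 + γ / w * (B - Ssum y N))⁻¹ := by
      rw [inv_le_inv₀ (hZx N hN1 le_rfl) (hZy N hN1 (by omega))]
      have : γ / w * (B - Ssum y N) ≤ γ / w * (B - Ssum x N) := by
        apply mul_le_mul_of_nonneg_left _ (le_of_lt (div_pos hγ hwpos))
        linarith
      linarith
    have hint := hinterior N hN1 hNM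
    rw [htermx] at huN
    linarith
  -- Step 2: propagate strictly
  have hclaim2 : ∀ i, 1 ≤ i → i ≤ N → y i < x i ∧ Ssum y i < Ssum x i := by
    intro i hi1
    induction i, hi1 using Nat.le_induction with
    | base =>
      intro _
      exact ⟨hstep1, by rw [Ssum_one, Ssum_one]; exact hstep1⟩
    | succ i hi ih =>
      intro hiN
      obtain ⟨hxy, hSS⟩ := ih (by omega)
      have hiN' : i < N := by omega
      have hiM : i < M := by omega
      have hu : (1 + γ * x i)⁻¹ < (1 + γ * y i)⁻¹ := by
        rw [inv_lt_inv₀ (hqx i hi (by omega)) (hqy i hi (by omega))]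
        have := mul_lt_mul_of_pos_left hxy hγ
        linarith
      have hh : (1 + γ / w * (B - Ssum y i))⁻¹ < (1 + γ / w * (B - Ssum x i))⁻¹ := by
        rw [inv_lt_inv₀ (hZy i hi (by omega)) (hZx i hi (by omega))]
        have : γ / w * (B - Ssum x i) < γ / w * (B - Ssum y i) := by
          apply mul_lt_mul_of_pos_left _ (div_pos hγ hwpos)
          linarith
        linarith
      have hEx := hEulx i hi hiN'
      have hEy := hEuly i hi hiM
      have hph : p * (1 + γ / w * (B - Ssum y i))⁻¹ < p * (1 + γ / w * (B - Ssum x i))⁻¹ :=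
        mul_lt_mul_of_pos_left hh hp
      have hu' : (1 + γ * x (i+1))⁻¹ < (1 + γ * y (i+1))⁻¹ := by
        have h5 : (1-p) * (1 + γ * x (i+1))⁻¹ < (1-p) * (1 + γ * y (i+1))⁻¹ := by
          linarith [hEx, hEy]
        exact lt_of_mul_lt_mul_left h5 (le_of_lt hple)
      have hxy' : y (i+1) < x (i+1) := by
        rw [inv_lt_inv₀ (hqx (i+1) (by omega) (by omega)) (hqy (i+1) (by omega) (by omega))] at hu'
        have h6 : γ * y (i+1) < γ * x (i+1) := by linarith
        exact lt_of_mul_lt_mul_left h6 (le_of_lt hγ)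
      refine ⟨hxy', ?_⟩
      rw [Ssum_succ, Ssum_succ]
      linarith
  exact (hclaim2 j hj hjN).1
end

section
/- Define B^{(N)} = B - ∑_{i=1}^N ξ_i^{(N)*}, where (ξ_j^{(N)*}) is the unique maximizer of T_N. Then B^{(N)} > 0 for every N, the sequence (B^{(N)})_N is strictly decreasing in N, and 0 < B^{(N)} < wB/N, so lim_{N→∞} B^{(N)} = 0. -/
open Real

section AuxiliaryLemmas
open Real Finset

noncomputable def coefA (p : ℝ) (w : ℕ) (j : ℕ) : ℝ := p * (1 - p)^(j + w - 1) * (1/2)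
noncomputable def coefD (p : ℝ) (w : ℕ) (k : ℕ) : ℝ := p^2 * (1 - p)^(k + w - 1) * ((w:ℝ)/2)
noncomputable def coefE (p : ℝ) (w N : ℕ) : ℝ := p * (1 - p)^(w + N) * ((w:ℝ)/2)
noncomputable def resid (B : ℝ) (x : ℕ → ℝ) (k : ℕ) : ℝ := B - ∑ i ∈ Finset.Icc 1 k, x i

lemma TN_decomp (B γ p : ℝ) (w N : ℕ) (ξ : ℕ → ℝ) :
    TN B γ p w N ξ =
      (∑ k ∈ Finset.Icc 1 w, p ^ 2 * (1 - p) ^ (k - 1) * ((k : ℝ) / 2) *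
          Real.logb 2 (1 + γ * B / k))
      + (∑ j ∈ Finset.Icc 1 N, coefA p w j * Real.logb 2 (1 + γ * ξ j))
      + (∑ k ∈ Finset.Icc 1 N, coefD p w k * Real.logb 2 (1 + (γ/w) * resid B ξ k))
      + coefE p w N * Real.logb 2 (1 + (γ/w) * resid B ξ N) := rfl

lemma icc_split (j N : ℕ) (hj : 1 ≤ j) (hjN : j ≤ N) (f : ℕ → ℝ) :
    ∑ k ∈ Finset.Icc 1 N, f k
      = ∑ k ∈ Finset.Icc 1 (j-1), f k + ∑ k ∈ Finset.Icc j N, f k := by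
  have e1 : Finset.Icc 1 N = Finset.Ioc 0 N := (Finset.Icc_add_one_left_eq_Ioc 0 N)
  have e2 : Finset.Icc 1 (j-1) = Finset.Ioc 0 (j-1) := (Finset.Icc_add_one_left_eq_Ioc 0 (j-1))
  have e3 : Finset.Icc j N = Finset.Ioc (j-1) N := by
    rw [← Finset.Icc_add_one_left_eq_Ioc]; congr 1; omega
  rw [e1, e2, e3]
  exact (Finset.sum_Ioc_consecutive _ (by omega) (by omega)).symm

lemma hasDerivAt_logb_lin (c x : ℝ) (h : 0 < 1 + c * x) :
    HasDerivAt (fun δ : ℝ => Real.logb 2 (1 + c * (x + δ)))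
      (c / ((1 + c * x) * Real.log 2)) 0 := by
  have hinner : HasDerivAt (fun δ : ℝ => 1 + c * (x + δ)) c 0 := by
    simpa using (((hasDerivAt_id (0:ℝ)).const_add x).const_mul c).const_add 1
  have hlog : HasDerivAt (fun δ : ℝ => Real.log (1 + c * (x + δ)))
      (c / (1 + c * x)) 0 := by
    have := hinner.log (by simpa using ne_of_gt h)
    simpa using this
  have := hlog.div_const (Real.log 2)
  simpa [Real.logb, div_div] using this

lemma hasDerivAt_logb_neg (c x : ℝ) (h : 0 < 1 + c * x) :
    HasDerivAt (fun δ : ℝ => Real.logb 2 (1 + c * (x - δ)))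
      (-(c / ((1 + c * x) * Real.log 2))) 0 := by
  have hinner : HasDerivAt (fun δ : ℝ => 1 + c * (x - δ)) (-c) 0 := by
    have : HasDerivAt (fun δ : ℝ => x - δ) (-1) 0 := by
      exact (hasDerivAt_id (0:ℝ)).const_sub x
    simpa [mul_comm] using (this.const_mul c).const_add 1
  have hlog : HasDerivAt (fun δ : ℝ => Real.log (1 + c * (x - δ)))
      (-c / (1 + c * x)) 0 := by
    have := hinner.log (by simpa using ne_of_gt h)
    simpa using this
  have := hlog.div_const (Real.log 2)
  simpa [Real.logb, div_div, neg_div] using this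

lemma deriv_TN (B γ p : ℝ) (w N : ℕ) (hγ : 0 < γ) (hw : 1 ≤ w) (x : ℕ → ℝ)
    (hx0 : ∀ j, 1 ≤ j → j ≤ N → 0 ≤ x j) (hr0 : ∀ k, k ≤ N → 0 ≤ resid B x k)
    (j : ℕ) (hj1 : 1 ≤ j) (hjN : j ≤ N) :
    HasDerivAt (fun δ => TN B γ p w N (Function.update x j (x j + δ)))
      (coefA p w j * (γ / ((1 + γ * x j) * Real.log 2))
        - ((∑ k ∈ Finset.Icc j N,
              coefD p w k * ((γ/w) / ((1 + (γ/w) * resid B x k) * Real.log 2)))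
           + coefE p w N * ((γ/w) / ((1 + (γ/w) * resid B x N) * Real.log 2)))) 0 := by
  have hwR : (0:ℝ) < w := by exact_mod_cast hw
  have hc : 0 < γ / w := div_pos hγ hwR
  have hjmem : j ∈ Finset.Icc 1 N := Finset.mem_Icc.2 ⟨hj1, hjN⟩
  have hxj : 0 < 1 + γ * x j := by
    have := hx0 j hj1 hjN; nlinarith
  have hrk : ∀ k, k ≤ N → 0 < 1 + (γ/w) * resid B x k := by
    intro k hk; have := hr0 k hk; nlinarith
  -- the function equality
  have hfun : (fun δ => TN B γ p w N (Function.update x j (x j + δ)))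
      = (fun δ =>
        ((∑ k ∈ Finset.Icc 1 w, p ^ 2 * (1 - p) ^ (k - 1) * ((k : ℝ) / 2) *
            Real.logb 2 (1 + γ * B / k))
        + ((∑ i ∈ (Finset.Icc 1 N).erase j, coefA p w i * Real.logb 2 (1 + γ * x i))
            + coefA p w j * Real.logb 2 (1 + γ * (x j + δ)))
        + ((∑ k ∈ Finset.Icc 1 (j-1), coefD p w k * Real.logb 2 (1 + (γ/w) * resid B x k))
            + ∑ k ∈ Finset.Icc j N,
                coefD p w k * Real.logb 2 (1 + (γ/w) * (resid B x k - δ)))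
        + coefE p w N * Real.logb 2 (1 + (γ/w) * (resid B x N - δ)))) := by
    funext δ
    rw [TN_decomp]
    have hsum_in : ∀ k, j ≤ k →
        ∑ i ∈ Finset.Icc 1 k, Function.update x j (x j + δ) i
          = (∑ i ∈ Finset.Icc 1 k, x i) + δ := by
      intro k hk
      have hjk : j ∈ Finset.Icc 1 k := Finset.mem_Icc.2 ⟨hj1, hk⟩
      rw [← Finset.sum_erase_add _ _ hjk, Function.update_self,
          ← Finset.sum_erase_add _ x hjk]
      have : ∑ i ∈ (Finset.Icc 1 k).erase j, Function.update x j (x j + δ) i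
          = ∑ i ∈ (Finset.Icc 1 k).erase j, x i :=
        Finset.sum_congr rfl fun i hi =>
          by rw [Function.update_of_ne (Finset.ne_of_mem_erase hi)]
      rw [this]; ring
    have hsum_out : ∀ k, k < j →
        ∑ i ∈ Finset.Icc 1 k, Function.update x j (x j + δ) i
          = ∑ i ∈ Finset.Icc 1 k, x i := by
      intro k hk
      refine Finset.sum_congr rfl fun i hi => ?_
      have : i ≠ j := by have := (Finset.mem_Icc.1 hi).2; omega
      rw [Function.update_of_ne this]
    have h1 : ∑ i ∈ Finset.Icc 1 N,
          coefA p w i * Real.logb 2 (1 + γ * Function.update x j (x j + δ) i)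
        = (∑ i ∈ (Finset.Icc 1 N).erase j, coefA p w i * Real.logb 2 (1 + γ * x i))
            + coefA p w j * Real.logb 2 (1 + γ * (x j + δ)) := by
      rw [← Finset.sum_erase_add _ _ hjmem, Function.update_self]
      congr 1
      refine Finset.sum_congr rfl fun i hi => ?_
      rw [Function.update_of_ne (Finset.ne_of_mem_erase hi)]
    have h2 : ∑ k ∈ Finset.Icc 1 N,
          coefD p w k * Real.logb 2 (1 + (γ/w) * resid B (Function.update x j (x j + δ)) k)
        = (∑ k ∈ Finset.Icc 1 (j-1), coefD p w k * Real.logb 2 (1 + (γ/w) * resid B x k))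
            + ∑ k ∈ Finset.Icc j N,
                coefD p w k * Real.logb 2 (1 + (γ/w) * (resid B x k - δ)) := by
      rw [icc_split j N hj1 hjN]
      congr 1
      · refine Finset.sum_congr rfl fun k hk => ?_
        have hkj : k < j := by have := (Finset.mem_Icc.1 hk).2; omega
        rw [show resid B (Function.update x j (x j + δ)) k = resid B x k from by
          unfold resid; rw [hsum_out k hkj]]
      · refine Finset.sum_congr rfl fun k hk => ?_
        have hkj : j ≤ k := (Finset.mem_Icc.1 hk).1
        rw [show resid B (Function.update x j (x j + δ)) k = resid B x k - δ from by
          unfold resid; rw [hsum_in k hkj]; ring]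
    have h3 : resid B (Function.update x j (x j + δ)) N = resid B x N - δ := by
      unfold resid; rw [hsum_in N hjN]; ring
    rw [h1, h2, h3]
  rw [hfun]
  have hA : HasDerivAt (fun δ : ℝ => coefA p w j * Real.logb 2 (1 + γ * (x j + δ)))
      (coefA p w j * (γ / ((1 + γ * x j) * Real.log 2))) 0 :=
    (hasDerivAt_logb_lin γ (x j) hxj).const_mul _
  have hS : HasDerivAt (fun δ : ℝ => ∑ k ∈ Finset.Icc j N,
        coefD p w k * Real.logb 2 (1 + (γ/w) * (resid B x k - δ)))
      (∑ k ∈ Finset.Icc j N,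
        coefD p w k * (-((γ/w) / ((1 + (γ/w) * resid B x k) * Real.log 2)))) 0 := by
    refine HasDerivAt.fun_sum fun k hk => ?_
    exact (hasDerivAt_logb_neg (γ/w) (resid B x k) (hrk k (Finset.mem_Icc.1 hk).2)).const_mul _
  have hE : HasDerivAt (fun δ : ℝ =>
        coefE p w N * Real.logb 2 (1 + (γ/w) * (resid B x N - δ)))
      (coefE p w N * (-((γ/w) / ((1 + (γ/w) * resid B x N) * Real.log 2)))) 0 :=
    (hasDerivAt_logb_neg (γ/w) (resid B x N) (hrk N le_rfl)).const_mul _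
  have hC1 : HasDerivAt (fun _ : ℝ => ∑ k ∈ Finset.Icc 1 w,
      p ^ 2 * (1 - p) ^ (k - 1) * ((k : ℝ) / 2) * Real.logb 2 (1 + γ * B / k)) 0 0 :=
    hasDerivAt_const _ _
  have hC2 : HasDerivAt (fun _ : ℝ => ∑ i ∈ (Finset.Icc 1 N).erase j,
      coefA p w i * Real.logb 2 (1 + γ * x i)) 0 0 := hasDerivAt_const _ _
  have hC3 : HasDerivAt (fun _ : ℝ => ∑ k ∈ Finset.Icc 1 (j-1),
      coefD p w k * Real.logb 2 (1 + (γ/w) * resid B x k)) 0 0 := hasDerivAt_const _ _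
  have htotal := ((hC1.fun_add (hC2.fun_add hA)).fun_add (hC3.fun_add hS)).fun_add hE
  refine htotal.congr_deriv ?_
  simp only [mul_neg, Finset.sum_neg_distrib]
  ring

/-- downward induction device -/
lemma down_ind (N : ℕ) (Q : ℕ → Prop) (base : Q N)
    (step : ∀ j, 1 ≤ j → j < N → Q (j+1) → Q j) :
    ∀ j, 1 ≤ j → j ≤ N → Q j := by
  have H : ∀ m j, N ≤ j + m → 1 ≤ j → j ≤ N → Q j := by
    intro m
    induction m with
    | zero =>
      intro j h1 h2 h3
      have : j = N := by omega
      subst this; exact base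
    | succ m ih =>
      intro j h1 h2 h3
      rcases eq_or_lt_of_le h3 with rfl | h
      · exact base
      · exact step j h2 h (ih (j+1) (by omega) (by omega) (by omega))
  exact fun j h1 h2 => H (N - j) j (by omega) h1 h2

lemma slope_nonpos {φ : ℝ → ℝ} {D ε : ℝ} (hd : HasDerivAt φ D 0) (hε : 0 < ε)
    (h : ∀ δ, 0 ≤ δ → δ < ε → φ δ ≤ φ 0) : D ≤ 0 := by
  have hs : Filter.Tendsto (slope φ 0) (nhdsWithin 0 (Set.Ioi 0)) (nhds D) :=
    (hasDerivAt_iff_tendsto_slope.1 hd).mono_left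
      (nhdsWithin_mono _ (fun x hx => ne_of_gt hx))
  refine le_of_tendsto hs ?_
  filter_upwards [Ioo_mem_nhdsGT_of_mem (Set.left_mem_Ico.2 hε)] with δ hδ
  have h1 : φ δ - φ 0 ≤ 0 := sub_nonpos.2 (h δ hδ.1.le hδ.2)
  have : slope φ 0 δ = (φ δ - φ 0) / δ := by
    simp [slope_def_field, div_eq_div_iff]
  rw [this]
  exact div_nonpos_of_nonpos_of_nonneg h1 hδ.1.le

lemma slope_nonneg {φ : ℝ → ℝ} {D ε : ℝ} (hd : HasDerivAt φ D 0) (hε : 0 < ε)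
    (h : ∀ δ, -ε < δ → δ ≤ 0 → φ δ ≤ φ 0) : 0 ≤ D := by
  have hs : Filter.Tendsto (slope φ 0) (nhdsWithin 0 (Set.Iio 0)) (nhds D) :=
    (hasDerivAt_iff_tendsto_slope.1 hd).mono_left
      (nhdsWithin_mono _ (fun x hx => ne_of_lt hx))
  refine ge_of_tendsto hs ?_
  filter_upwards [Ioo_mem_nhdsLT_of_mem (show (0:ℝ) ∈ Set.Ioc (-ε) 0 from Set.mem_Ioc.2 ⟨by linarith, le_refl (0:ℝ)⟩)] with δ hδ
  have h1 : φ δ - φ 0 ≤ 0 := sub_nonpos.2 (h δ hδ.1 hδ.2.le)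
  have : slope φ 0 δ = (φ δ - φ 0) / δ := by
    simp [slope_def_field, div_eq_div_iff]
  rw [this]
  exact div_nonneg_iff.2 (Or.inr ⟨h1, hδ.2.le⟩)

/-- telescoping geometric tail: `∑_{k=j}^{N} p(1-p)^{k+w-1} = (1-p)^{j+w-1} - (1-p)^{N+w}` -/
lemma geom_tail (p : ℝ) (w j N : ℕ) (hw : 1 ≤ w) (hj : 1 ≤ j) (hjN : j ≤ N) :
    ∑ k ∈ Finset.Icc j N, p * (1-p)^(k+w-1) = (1-p)^(j+w-1) - (1-p)^(N+w) := by
  induction N, hjN using Nat.le_induction with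
  | base =>
    rw [Finset.Icc_self, Finset.sum_singleton]
    have h1 : (1-p)^(j+w) = (1-p)^(j+w-1) * (1-p) := by
      rw [← pow_succ]; congr 1; omega
    rw [h1]; ring
  | succ N hN ih =>
    rw [Finset.sum_Icc_succ_top (by omega), ih]
    have e1 : N + 1 + w - 1 = N + w := by omega
    have e2 : (1-p)^(N+1+w) = (1-p)^(N+w) * (1-p) := by
      rw [← pow_succ]; congr 1; omega
    rw [e1, e2]; ring

set_option maxHeartbeats 1000000 in
lemma foc_facts (B γ p : ℝ) (w N : ℕ) (hB : 0 < B) (hγ : 0 < γ) (hw : 1 ≤ w)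
    (hp : 0 < p) (hp1 : p < 1) (N1 : 1 ≤ N) (x : ℕ → ℝ)
    (hadm : x ∈ adm B N)
    (hmax : ∀ η ∈ adm B N, TN B γ p w N η ≤ TN B γ p w N x) :
    0 < resid B x N
    ∧ (∀ j, 1 ≤ j → j ≤ N → 0 < x j)
    ∧ (w : ℝ) * x N = resid B x N
    ∧ ∀ j, 1 ≤ j → j < N →
        1/(1 + γ * x j) = (1-p)/(1 + γ * x (j+1)) + p/(1 + (γ/w) * resid B x j) := by
  obtain ⟨hx0, hxout, hxsum⟩ := hadm
  have hwR : (0:ℝ) < w := by exact_mod_cast hw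
  have hc : 0 < γ / (w:ℝ) := div_pos hγ hwR
  have hL : 0 < Real.log 2 := Real.log_pos one_lt_two
  have h1p : 0 < 1 - p := by linarith
  have hApos : ∀ i, 0 < coefA p w i := by intro i; unfold coefA; positivity
  have hDpos : ∀ k, 0 < coefD p w k := by intro k; unfold coefD; positivity
  have hEpos : 0 < coefE p w N := by unfold coefE; positivity
  have hr0 : ∀ k, k ≤ N → 0 ≤ resid B x k := by
    intro k hk
    have hsub : Finset.Icc 1 k ⊆ Finset.Icc 1 N := Finset.Icc_subset_Icc_right hk
    have : ∑ i ∈ Finset.Icc 1 k, x i ≤ ∑ i ∈ Finset.Icc 1 N, x i :=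
      Finset.sum_le_sum_of_subset_of_nonneg hsub
        (fun i hi _ => hx0 i (Finset.mem_Icc.1 hi).1 (Finset.mem_Icc.1 hi).2)
    unfold resid; linarith
  have hrrec : ∀ k, resid B x k = resid B x (k+1) + x (k+1) := by
    intro k; unfold resid
    rw [Finset.sum_Icc_succ_top (by omega : 1 ≤ k+1)]; ring
  have hupd0 : ∀ j, Function.update x j (x j + 0) = x := by
    intro j; rw [add_zero]; exact Function.update_eq_self _ _
  have hsum_upd : ∀ j, 1 ≤ j → j ≤ N → ∀ δ : ℝ,
      ∑ i ∈ Finset.Icc 1 N, Function.update x j (x j + δ) i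
        = (∑ i ∈ Finset.Icc 1 N, x i) + δ := by
    intro j hj1 hjN δ
    have hjk : j ∈ Finset.Icc 1 N := Finset.mem_Icc.2 ⟨hj1, hjN⟩
    rw [← Finset.sum_erase_add _ _ hjk, Function.update_self,
        ← Finset.sum_erase_add _ x hjk]
    have : ∑ i ∈ (Finset.Icc 1 N).erase j, Function.update x j (x j + δ) i
        = ∑ i ∈ (Finset.Icc 1 N).erase j, x i :=
      Finset.sum_congr rfl fun i hi => by
        rw [Function.update_of_ne (Finset.ne_of_mem_erase hi)]
    rw [this]; ring
  have hadm_upd : ∀ j, 1 ≤ j → j ≤ N → ∀ δ : ℝ, 0 ≤ x j + δ →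
      (∑ i ∈ Finset.Icc 1 N, x i) + δ ≤ B →
      Function.update x j (x j + δ) ∈ adm B N := by
    intro j hj1 hjN δ h1 h2
    refine ⟨?_, ?_, ?_⟩
    · intro i hi1 hiN
      rcases eq_or_ne i j with rfl | hne
      · rwa [Function.update_self]
      · rw [Function.update_of_ne hne]; exact hx0 i hi1 hiN
    · intro i hi
      have hne : i ≠ j := by rcases hi with h | h <;> omega
      rw [Function.update_of_ne hne]; exact hxout i hi
    · rw [hsum_upd j hj1 hjN δ]; exact h2
  set G : ℕ → ℝ := fun j => coefA p w j * (γ / ((1 + γ * x j) * Real.log 2)) with hGdef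
  set M : ℕ → ℝ := fun j =>
      (∑ k ∈ Finset.Icc j N,
        coefD p w k * ((γ/w) / ((1 + (γ/w) * resid B x k) * Real.log 2)))
      + coefE p w N * ((γ/w) / ((1 + (γ/w) * resid B x N) * Real.log 2)) with hMdef
  have hD : ∀ j, 1 ≤ j → j ≤ N →
      HasDerivAt (fun δ => TN B γ p w N (Function.update x j (x j + δ))) (G j - M j) 0 := by
    intro j h1 h2
    simp only [hGdef, hMdef]
    exact deriv_TN B γ p w N hγ hw x hx0 hr0 j h1 h2
  have hge : ∀ j, 1 ≤ j → j ≤ N → 0 < x j → 0 ≤ G j - M j := by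
    intro j hj1 hjN hxj
    refine slope_nonneg (hD j hj1 hjN) hxj (fun δ hδ1 hδ2 => ?_)
    have hmem := hadm_upd j hj1 hjN δ (by linarith) (by linarith)
    have h := hmax _ hmem
    show TN B γ p w N (Function.update x j (x j + δ))
        ≤ TN B γ p w N (Function.update x j (x j + 0))
    rw [hupd0 j]; exact h
  have hsumDE : ∀ j, 1 ≤ j → j ≤ N →
      (∑ k ∈ Finset.Icc j N, coefD p w k) + coefE p w N = (w:ℝ) * coefA p w j := by
    intro j hj1 hjN
    have h1 : ∑ k ∈ Finset.Icc j N, coefD p w k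
        = (p * (w:ℝ) / 2) * ∑ k ∈ Finset.Icc j N, p * (1-p)^(k+w-1) := by
      rw [Finset.mul_sum]
      refine Finset.sum_congr rfl fun k _ => ?_
      unfold coefD; ring
    rw [h1, geom_tail p w j N hw hj1 hjN]
    unfold coefE coefA
    rw [show w + N = N + w from add_comm w N]
    ring
  -- Part A : 0 < resid B x N
  have hrposN : 0 < resid B x N := by
    rcases lt_or_eq_of_le hxsum with h | h
    · unfold resid; linarith
    · exfalso
      have hresN : resid B x N = 0 := by unfold resid; linarith
      have key : ∀ j, 1 ≤ j → j ≤ N → (∀ k, j < k → k ≤ N → x k = 0) → x j = 0 := by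
        intro j hj1 hjN htail
        by_contra hxj
        have hxjpos : 0 < x j := lt_of_le_of_ne (hx0 j hj1 hjN) (Ne.symm hxj)
        have hrk0 : ∀ k, 1 ≤ k → k ≤ N → (j ≤ k → resid B x k = 0) := by
          refine down_ind N (fun k => (j ≤ k → resid B x k = 0)) (fun _ => hresN) ?_
          intro k hk1 hkN ih hjk
          rw [hrrec k, ih (by omega), htail (k+1) (by omega) (by omega)]
          ring
        have hM : M j = γ * coefA p w j / Real.log 2 := by
          simp only [hMdef]
          have hcongr : ∀ k ∈ Finset.Icc j N,
              coefD p w k * ((γ/w) / ((1 + (γ/w) * resid B x k) * Real.log 2))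
                = coefD p w k * ((γ/w) / Real.log 2) := by
            intro k hk
            obtain ⟨hk1, hk2⟩ := Finset.mem_Icc.1 hk
            rw [hrk0 k (by omega) hk2 hk1]
            norm_num
          rw [Finset.sum_congr rfl hcongr, hrk0 N (by omega) le_rfl hjN,
            ← Finset.sum_mul]
          have hde := hsumDE j hj1 hjN
          have hWne : (w:ℝ) ≠ 0 := ne_of_gt hwR
          rw [mul_zero, add_zero, one_mul, ← add_mul, hde]
          field_simp
        have hG : G j < γ * coefA p w j / Real.log 2 := by
          simp only [hGdef]
          have hden : Real.log 2 < (1 + γ * x j) * Real.log 2 := by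
            nlinarith [mul_pos (mul_pos hγ hxjpos) hL]
          have h2 : γ / ((1 + γ * x j) * Real.log 2) < γ / Real.log 2 :=
            div_lt_div_of_pos_left hγ hL hden
          calc coefA p w j * (γ / ((1 + γ * x j) * Real.log 2))
              < coefA p w j * (γ / Real.log 2) := by
                exact mul_lt_mul_of_pos_left h2 (hApos j)
            _ = γ * coefA p w j / Real.log 2 := by ring
        have := hge j hj1 hjN hxjpos
        rw [hM] at this
        linarith
      have allzero : ∀ j, 1 ≤ j → j ≤ N → (∀ k, j ≤ k → k ≤ N → x k = 0) := by
        refine down_ind N (fun j => ∀ k, j ≤ k → k ≤ N → x k = 0) ?_ ?_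
        · intro k hk1 hk2
          have hkN : k = N := le_antisymm hk2 hk1
          rw [hkN]
          exact key N N1 le_rfl fun m h1 h2 => absurd (h1.trans_le h2) (lt_irrefl N)
        · intro j hj1 hjN ih k hjk hkN
          rcases eq_or_lt_of_le hjk with heq | h
          · rw [← heq]
            exact key j hj1 (le_of_lt hjN) fun m h1 h2 => ih m h1 h2
          · exact ih k h hkN
      have hsum0 : ∑ i ∈ Finset.Icc 1 N, x i = 0 :=
        Finset.sum_eq_zero fun i hi =>
          allzero 1 le_rfl N1 i (Finset.mem_Icc.1 hi).1 (Finset.mem_Icc.1 hi).2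
      rw [hsum0] at h
      linarith
  have hPltB : ∑ i ∈ Finset.Icc 1 N, x i < B := by
    have := hrposN; unfold resid at this; linarith
  have hle : ∀ j, 1 ≤ j → j ≤ N → G j - M j ≤ 0 := by
    intro j hj1 hjN
    refine slope_nonpos (hD j hj1 hjN) (show (0:ℝ) < B - ∑ i ∈ Finset.Icc 1 N, x i by linarith)
      (fun δ hδ1 hδ2 => ?_)
    have hmem := hadm_upd j hj1 hjN δ (by have := hx0 j hj1 hjN; linarith) (by linarith)
    have h := hmax _ hmem
    show TN B γ p w N (Function.update x j (x j + δ))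
        ≤ TN B γ p w N (Function.update x j (x j + 0))
    rw [hupd0 j]; exact h
  -- Part B : positivity of x j
  have hxpos : ∀ j, 1 ≤ j → j ≤ N → 0 < x j := by
    intro j hj1 hjN
    by_contra hxj
    have hxj0 : x j = 0 := le_antisymm (not_lt.1 hxj) (hx0 j hj1 hjN)
    have hGj : G j = γ * coefA p w j / Real.log 2 := by
      simp only [hGdef, hxj0]; ring_nf
    have hMj : M j < γ * coefA p w j / Real.log 2 := by
      simp only [hMdef]
      have hbound : ∀ k ∈ Finset.Icc j N,
          coefD p w k * ((γ/w) / ((1 + (γ/w) * resid B x k) * Real.log 2))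
            ≤ coefD p w k * ((γ/w) / Real.log 2) := by
        intro k hk
        obtain ⟨hk1, hk2⟩ := Finset.mem_Icc.1 hk
        have hrk := hr0 k hk2
        have : (γ/w) / ((1 + (γ/w) * resid B x k) * Real.log 2) ≤ (γ/w) / Real.log 2 := by
          apply div_le_div_of_nonneg_left (le_of_lt hc) hL
          nlinarith [mul_nonneg (mul_nonneg hc.le hrk) hL.le]
        exact mul_le_mul_of_nonneg_left this (le_of_lt (hDpos k))
      have hEb : coefE p w N * ((γ/w) / ((1 + (γ/w) * resid B x N) * Real.log 2))
          < coefE p w N * ((γ/w) / Real.log 2) := by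
        have : (γ/w) / ((1 + (γ/w) * resid B x N) * Real.log 2) < (γ/w) / Real.log 2 := by
          apply div_lt_div_of_pos_left hc hL
          nlinarith [mul_pos (mul_pos hc hrposN) hL]
        exact mul_lt_mul_of_pos_left this hEpos
      have hsum := Finset.sum_le_sum hbound
      have : (∑ k ∈ Finset.Icc j N, coefD p w k * ((γ/w) / Real.log 2))
          + coefE p w N * ((γ/w) / Real.log 2)
          = γ * coefA p w j / Real.log 2 := by
        rw [← Finset.sum_mul, ← add_mul, hsumDE j hj1 hjN]
        have hWne : (w:ℝ) ≠ 0 := ne_of_gt hwR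
        field_simp
      linarith
    have := hle j hj1 hjN
    rw [hGj] at this
    linarith
  -- FOC equalities
  have hfoc : ∀ j, 1 ≤ j → j ≤ N → G j = M j := by
    intro j hj1 hjN
    have h1 := hge j hj1 hjN (hxpos j hj1 hjN)
    have h2 := hle j hj1 hjN
    linarith
  -- Part C : w * x N = resid B x N
  have hxN : (w:ℝ) * x N = resid B x N := by
    have heq := hfoc N N1 le_rfl
    simp only [hGdef, hMdef] at heq
    rw [Finset.Icc_self, Finset.sum_singleton] at heq
    have hu : (0:ℝ) < 1 + γ * x N := by nlinarith [hxpos N N1 le_rfl]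
    have hv : (0:ℝ) < 1 + (γ/w) * resid B x N := by nlinarith [mul_pos hc hrposN]
    have hDE := hsumDE N N1 le_rfl
    rw [Finset.Icc_self, Finset.sum_singleton] at hDE
    have hAN := hApos N
    have hWne : (w:ℝ) ≠ 0 := ne_of_gt hwR
    have hkey : coefA p w N * (γ / ((1 + γ * x N) * Real.log 2))
        = (w:ℝ) * coefA p w N * ((γ/w) / ((1 + (γ/w) * resid B x N) * Real.log 2)) := by
      rw [heq, ← hDE]; ring
    have e : (w:ℝ) * (1 + γ/w * resid B x N) = w + γ * resid B x N := by field_simp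
    have h0 : (0:ℝ) < (w:ℝ) + γ * resid B x N := by nlinarith [mul_pos hwR hv, e]
    have h1 : (((w:ℝ) + γ * resid B x N) * Real.log 2) ≠ 0 := by positivity
    field_simp at hkey
    apply mul_left_cancel₀ (show (coefA p w N * γ^2 * Real.log 2) ≠ 0 by positivity)
    linear_combination (-(coefA p w N * γ * Real.log 2)) * hkey
  -- Part D : the recursion
  refine ⟨hrposN, hxpos, hxN, ?_⟩
  intro j hj1 hjN
  have heq1 := hfoc j hj1 (le_of_lt hjN)
  have heq2 := hfoc (j+1) (by omega) hjN
  have hstep : ∀ f : ℕ → ℝ, ∑ k ∈ Finset.Icc j N, f k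
      = f j + ∑ k ∈ Finset.Icc (j+1) N, f k := by
    intro f
    rw [← Finset.Ico_add_one_right_eq_Icc, Finset.sum_eq_sum_Ico_succ_bot (by omega), Finset.Ico_add_one_right_eq_Icc]
  have hsplitM : M j = coefD p w j * ((γ/w) / ((1 + (γ/w) * resid B x j) * Real.log 2)) + M (j+1) := by
    simp only [hMdef]
    rw [hstep]
    ring
  have hkey : G j = coefD p w j * ((γ/w) / ((1 + (γ/w) * resid B x j) * Real.log 2)) + G (j+1) := by
    rw [heq1, hsplitM, heq2]
  simp only [hGdef] at hkey
  have hu : (0:ℝ) < 1 + γ * x j := by nlinarith [hxpos j hj1 (le_of_lt hjN)]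
  have hu' : (0:ℝ) < 1 + γ * x (j+1) := by nlinarith [hxpos (j+1) (by omega) hjN]
  have hv : (0:ℝ) < 1 + (γ/w) * resid B x j := by
    nlinarith [mul_nonneg hc.le (hr0 j (le_of_lt hjN))]
  have hA1 : coefA p w (j+1) = (1-p) * coefA p w j := by
    unfold coefA
    have : (1-p)^(j+1+w-1) = (1-p)^(j+w-1) * (1-p) := by
      rw [← pow_succ]; congr 1; omega
    rw [this]; ring
  have hD1 : coefD p w j = p * (w:ℝ) * coefA p w j := by
    unfold coefD coefA; ring
  rw [hA1, hD1] at hkey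
  have hAj := hApos j
  have hWne : (w:ℝ) ≠ 0 := ne_of_gt hwR
  have e : (w:ℝ) * (1 + γ/w * resid B x j) = w + γ * resid B x j := by field_simp
  have h0 : (0:ℝ) < (w:ℝ) + γ * resid B x j := by nlinarith [mul_pos hwR hv, e]
  have h1 : (((w:ℝ) + γ * resid B x j) * Real.log 2) ≠ 0 := by positivity
  field_simp at hkey ⊢
  apply mul_left_cancel₀ (show (coefA p w j * γ * Real.log 2 ^ 2) ≠ 0 by positivity)
  linear_combination (coefA p w j * γ * Real.log 2 ^ 2) * hkey


lemma resid_rec (B : ℝ) (x : ℕ → ℝ) (k : ℕ) :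
    resid B x k = resid B x (k+1) + x (k+1) := by
  unfold resid
  rw [Finset.sum_Icc_succ_top (by omega : 1 ≤ k+1)]
  ring

lemma resid_zero (B : ℝ) (x : ℕ → ℝ) : resid B x 0 = B := by
  unfold resid; simp

lemma resid_nonneg (B : ℝ) (N : ℕ) (x : ℕ → ℝ) (hadm : x ∈ adm B N) :
    ∀ k, k ≤ N → 0 ≤ resid B x k := by
  obtain ⟨hx0, _, hxsum⟩ := hadm
  intro k hk
  have hsub : Finset.Icc 1 k ⊆ Finset.Icc 1 N := Finset.Icc_subset_Icc_right hk
  have : ∑ i ∈ Finset.Icc 1 k, x i ≤ ∑ i ∈ Finset.Icc 1 N, x i :=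
    Finset.sum_le_sum_of_subset_of_nonneg hsub
      (fun i hi _ => hx0 i (Finset.mem_Icc.1 hi).1 (Finset.mem_Icc.1 hi).2)
  unfold resid; linarith

set_option maxHeartbeats 1000000 in
lemma mono_facts (B γ p : ℝ) (w N : ℕ) (hγ : 0 < γ) (hw : 1 ≤ w) (hp : 0 < p) (hp1 : p < 1)
    (x : ℕ → ℝ) (N1 : 1 ≤ N)
    (hxpos : ∀ j, 1 ≤ j → j ≤ N → 0 < x j)
    (hr0 : ∀ k, k ≤ N → 0 ≤ resid B x k)
    (hxN : (w:ℝ) * x N = resid B x N)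
    (hrec : ∀ j, 1 ≤ j → j < N →
      1/(1 + γ * x j) = (1-p)/(1 + γ * x (j+1)) + p/(1 + (γ/w) * resid B x j)) :
    ∀ j, 1 ≤ j → j ≤ N → x N ≤ x j ∧ (w:ℝ) * x j ≤ resid B x j := by
  have hwR : (0:ℝ) < w := by exact_mod_cast hw
  refine down_ind N _ ⟨le_rfl, le_of_eq hxN⟩ ?_
  intro j hj1 hjN ih
  obtain ⟨ih1, ih2⟩ := ih
  have hx1 := hxpos (j+1) (by omega) hjN
  have hxj := hxpos j hj1 (le_of_lt hjN)
  have hrr := resid_rec B x j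
  have hrj : (w:ℝ) * x (j+1) < resid B x j := by
    rw [hrr]; nlinarith [ih2, hx1, hwR]
  have hu : (0:ℝ) < 1 + γ * x j := by nlinarith
  have hu' : (0:ℝ) < 1 + γ * x (j+1) := by nlinarith
  have hr := hr0 j (le_of_lt hjN)
  have heq := hrec j hj1 hjN
  have e : (w:ℝ) * (1 + γ/w * resid B x j) = w + γ * resid B x j := by field_simp
  have hv : (0:ℝ) < 1 + (γ/w) * resid B x j := by positivity
  have h0 : (0:ℝ) < (w:ℝ) + γ * resid B x j := by nlinarith [mul_pos hwR hv, e]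
  have h1 : ((w:ℝ) + γ * resid B x j) ≠ 0 := ne_of_gt h0
  field_simp at heq
  have htwu' : (w:ℝ) * (1 + γ * x (j+1)) < (w:ℝ) + γ * resid B x j := by
    have := mul_lt_mul_of_pos_left hrj hγ
    nlinarith
  have h1p : (0:ℝ) < 1 - p := by linarith
  have hid : ((w:ℝ) + γ * resid B x j) * ((1 + γ * x j) - (1 + γ * x (j+1)))
      = p * (1 + γ * x j) * (((w:ℝ) + γ * resid B x j) - (w:ℝ) * (1 + γ * x (j+1))) := by
    linear_combination -heq
  have hid2 : (1 + γ * x (j+1)) * (((w:ℝ) + γ * resid B x j) - (w:ℝ) * (1 + γ * x j))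
      = (1-p) * (1 + γ * x j) * (((w:ℝ) + γ * resid B x j) - (w:ℝ) * (1 + γ * x (j+1))) := by
    linear_combination heq
  have hpos1 : 0 < p * (1 + γ * x j) * (((w:ℝ) + γ * resid B x j) - (w:ℝ) * (1 + γ * x (j+1))) :=
    mul_pos (mul_pos hp hu) (sub_pos.2 htwu')
  have hpos2 : 0 < (1-p) * (1 + γ * x j) * (((w:ℝ) + γ * resid B x j) - (w:ℝ) * (1 + γ * x (j+1))) :=
    mul_pos (mul_pos h1p hu) (sub_pos.2 htwu')
  constructor
  · have hlt : x (j+1) < x j := by nlinarith [hid, hpos1, h0, hγ, mul_pos h0 hγ]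
    linarith
  · have ht : (w:ℝ) * (1 + γ * x j) < (w:ℝ) + γ * resid B x j := by
      nlinarith [hid2, hpos2, hu']
    nlinarith [ht, hγ, mul_pos hwR hγ]

set_option maxHeartbeats 1000000 in
lemma cross_lt (B γ p : ℝ) (w N : ℕ) (hγ : 0 < γ) (hw : 1 ≤ w) (hp : 0 < p) (hp1 : p < 1)
    (x y : ℕ → ℝ) (N1 : 1 ≤ N)
    (hy1 : 0 < y 1)
    (hrx0 : ∀ k, k ≤ N → 0 ≤ resid B x k) (hry0 : ∀ k, k ≤ N+1 → 0 ≤ resid B y k)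
    (hxN : (w:ℝ) * x N = resid B x N) (hyN : (w:ℝ) * y (N+1) = resid B y (N+1))
    (hrecx : ∀ j, 1 ≤ j → j < N →
      1/(1+γ*x j) = (1-p)/(1+γ*x (j+1)) + p/(1+(γ/w)*resid B x j))
    (hrecy : ∀ j, 1 ≤ j → j < N+1 →
      1/(1+γ*y j) = (1-p)/(1+γ*y (j+1)) + p/(1+(γ/w)*resid B y j))
    (hxpos : ∀ j, 1 ≤ j → j ≤ N → 0 ≤ x j)
    (hypos : ∀ j, 1 ≤ j → j ≤ N+1 → 0 ≤ y j) :
    resid B y (N+1) < resid B x N := by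
  have hwR : (0:ℝ) < w := by exact_mod_cast hw
  have hc : 0 ≤ γ / (w:ℝ) := le_of_lt (div_pos hγ hwR)
  by_contra hcon
  push_neg at hcon
  have main : ∀ j, 1 ≤ j → j ≤ N → x j ≤ y (j+1) ∧ resid B x j ≤ resid B y (j+1) := by
    refine down_ind N _ ⟨?_, hcon⟩ ?_
    · have : (w:ℝ) * x N ≤ (w:ℝ) * y (N+1) := by rw [hxN, hyN]; exact hcon
      exact le_of_mul_le_mul_left this hwR
    · intro j hj1 hjN ih
      obtain ⟨ih1, ih2⟩ := ih
      have key2 : resid B x j ≤ resid B y (j+1) := by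
        rw [resid_rec B x j, resid_rec B y (j+1)]; linarith
      refine ⟨?_, key2⟩
      have hux : (0:ℝ) < 1 + γ * x j := by
        nlinarith [hxpos j hj1 (le_of_lt hjN), hγ]
      have hux' : (0:ℝ) < 1 + γ * x (j+1) := by
        nlinarith [hxpos (j+1) (by omega) hjN, hγ]
      have huy : (0:ℝ) < 1 + γ * y (j+1) := by
        nlinarith [hypos (j+1) (by omega) (by omega), hγ]
      have huy' : (0:ℝ) < 1 + γ * y (j+1+1) := by
        nlinarith [hypos (j+1+1) (by omega) (by omega), hγ]
      have hvx : (0:ℝ) < 1 + (γ/w) * resid B x j := by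
        nlinarith [mul_nonneg hc (hrx0 j (le_of_lt hjN))]
      have hvy : (0:ℝ) < 1 + (γ/w) * resid B y (j+1) := by
        nlinarith [mul_nonneg hc (hry0 (j+1) (by omega))]
      have huu : 1 + γ * x (j+1) ≤ 1 + γ * y (j+1+1) := by nlinarith [ih1, hγ]
      have hvv : 1 + (γ/w) * resid B x j ≤ 1 + (γ/w) * resid B y (j+1) := by
        nlinarith [mul_le_mul_of_nonneg_left key2 hc]
      have hx_eq := hrecx j hj1 hjN
      have hy_eq := hrecy (j+1) (by omega) (by omega)
      have hstep : 1/(1 + γ * y (j+1)) ≤ 1/(1 + γ * x j) := by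
        rw [hx_eq, hy_eq]
        have t1 : (1-p)/(1 + γ * y (j+1+1)) ≤ (1-p)/(1 + γ * x (j+1)) :=
          div_le_div_of_nonneg_left (by linarith) hux' huu
        have t2 : p/(1 + (γ/w) * resid B y (j+1)) ≤ p/(1 + (γ/w) * resid B x j) :=
          div_le_div_of_nonneg_left (le_of_lt hp) hvx hvv
        linarith
      have hfin := le_of_one_div_le_one_div huy hstep
      nlinarith [hfin, hγ]
  have h1 := main 1 le_rfl N1
  have e1 : resid B x 0 ≤ resid B y 1 := by
    rw [resid_rec B x 0, resid_rec B y 1]; linarith [h1.1, h1.2]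
  rw [resid_zero] at e1
  have e2 : resid B y 1 = B - y 1 := by unfold resid; simp
  rw [e2] at e1
  linarith

end AuxiliaryLemmas

/-- Let `B^{(N)} = B - ∑_{i=1}^N ξ_i^{(N)*}` for the maximizer `ξ^{(N)*}` of `T_N`.
Then `B^{(N)} > 0`, the sequence `(B^{(N)})` is strictly decreasing, `B^{(N)} < wB/N`,
and `B^{(N)} → 0`. -/

theorem residual_battery_tendsto_zero (B γ p : ℝ) (w : ℕ) (hB : 0 < B) (hγ : 0 < γ)
    (hw : 1 ≤ w) (hp : 0 < p) (hp1 : p < 1) (ξ : ℕ → ℕ → ℝ)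
    (hξ : ∀ N, 1 ≤ N → ξ N ∈ adm B N)
    (hmax : ∀ N, 1 ≤ N → ∀ η ∈ adm B N, TN B γ p w N η ≤ TN B γ p w N (ξ N)) :
    (∀ N, 1 ≤ N → 0 < B - ∑ i ∈ Finset.Icc 1 N, ξ N i)
    ∧ (∀ N, 1 ≤ N →
        B - ∑ i ∈ Finset.Icc 1 (N + 1), ξ (N + 1) i
          < B - ∑ i ∈ Finset.Icc 1 N, ξ N i)
    ∧ (∀ N, 1 ≤ N → B - ∑ i ∈ Finset.Icc 1 N, ξ N i < w * B / N)
    ∧ Filter.Tendsto (fun N => B - ∑ i ∈ Finset.Icc 1 N, ξ N i) Filter.atTop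
        (nhds 0) := by
  have hwR : (0:ℝ) < w := by exact_mod_cast hw
  have facts : ∀ N, 1 ≤ N →
      0 < resid B (ξ N) N
      ∧ (∀ j, 1 ≤ j → j ≤ N → 0 < ξ N j)
      ∧ (w : ℝ) * ξ N N = resid B (ξ N) N
      ∧ ∀ j, 1 ≤ j → j < N →
          1/(1 + γ * ξ N j) = (1-p)/(1 + γ * ξ N (j+1)) + p/(1 + (γ/w) * resid B (ξ N) j) :=
    fun N hN => foc_facts B γ p w N hB hγ hw hp hp1 hN (ξ N) (hξ N hN) (hmax N hN)
  have part1 : ∀ N, 1 ≤ N → 0 < B - ∑ i ∈ Finset.Icc 1 N, ξ N i :=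
    fun N hN => (facts N hN).1
  have part3 : ∀ N, 1 ≤ N → B - ∑ i ∈ Finset.Icc 1 N, ξ N i < w * B / N := by
    intro N hN
    obtain ⟨hrpos, hxpos, hxN, hrec⟩ := facts N hN
    have hmono := mono_facts B γ p w N hγ hw hp hp1 (ξ N) hN hxpos
      (resid_nonneg B N (ξ N) (hξ N hN)) hxN hrec
    have hcard : (Finset.Icc 1 N).card = N := by rw [Nat.card_Icc]; omega
    have hsum : (N:ℝ) * ξ N N ≤ ∑ i ∈ Finset.Icc 1 N, ξ N i := by
      have h := Finset.card_nsmul_le_sum (Finset.Icc 1 N) (ξ N) (ξ N N)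
        (fun i hi => (hmono i (Finset.mem_Icc.1 hi).1 (Finset.mem_Icc.1 hi).2).1)
      rwa [hcard, nsmul_eq_mul] at h
    have hNR : (0:ℝ) < N := by exact_mod_cast hN
    rw [lt_div_iff₀ hNR]
    have h2 : (N:ℝ) * ((w:ℝ) * ξ N N) = (N:ℝ) * resid B (ξ N) N := by rw [hxN]
    have h3 : (w:ℝ) * ((N:ℝ) * ξ N N) ≤ (w:ℝ) * ∑ i ∈ Finset.Icc 1 N, ξ N i :=
      mul_le_mul_of_nonneg_left hsum (le_of_lt hwR)
    have h4 : resid B (ξ N) N = B - ∑ i ∈ Finset.Icc 1 N, ξ N i := rfl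
    have h5 : 0 < (w:ℝ) * resid B (ξ N) N := mul_pos hwR hrpos
    rw [← h4]
    nlinarith [h2, h3, h5]
  have part2 : ∀ N, 1 ≤ N →
      B - ∑ i ∈ Finset.Icc 1 (N + 1), ξ (N + 1) i
        < B - ∑ i ∈ Finset.Icc 1 N, ξ N i := by
    intro N hN
    obtain ⟨hrposx, hxpos, hxN, hrecx⟩ := facts N hN
    obtain ⟨hrposy, hypos, hyN, hrecy⟩ := facts (N+1) (by omega)
    exact cross_lt B γ p w N hγ hw hp hp1 (ξ N) (ξ (N+1)) hN
      (hypos 1 le_rfl (by omega))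
      (resid_nonneg B N (ξ N) (hξ N hN))
      (resid_nonneg B (N+1) (ξ (N+1)) (hξ (N+1) (by omega)))
      hxN hyN hrecx hrecy
      (fun j h1 h2 => le_of_lt (hxpos j h1 h2))
      (fun j h1 h2 => le_of_lt (hypos j h1 h2))
  refine ⟨part1, part2, part3, ?_⟩
  have htop : Filter.Tendsto (fun N : ℕ => (w:ℝ) * B / N) Filter.atTop (nhds 0) :=
    tendsto_const_div_atTop_nhds_zero_nat _
  refine tendsto_of_tendsto_of_tendsto_of_le_of_le' tendsto_const_nhds htop ?_ ?_
  · exact Filter.eventually_atTop.2 ⟨1, fun N hN => le_of_lt (part1 N hN)⟩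
  · exact Filter.eventually_atTop.2 ⟨1, fun N hN => le_of_lt (part3 N hN)⟩
end

section
/- Let B, γ > 0, w ≥ 1 integer, p ∈ (0,1). If (ξ_j^*)_{j≥1} is a nonnegative sequence satisfying the recursion (1-p)/(1+γξ^*_{j+1}) = 1/(1+γξ^*_j) - p/(1 + (γ/w)(B - ∑_{i=1}^j ξ^*_i)) for all j ≥ 1 together with ∑_{j=1}^∞ ξ^*_j = B, then such a sequence is unique: any two sequences satisfying both conditions coincide. -/
lemma icc_sum_eq_range (g : ℕ → ℝ) (j : ℕ) :
    ∑ i ∈ Finset.Icc 1 j, g i = ∑ k ∈ Finset.range j, g (k+1) := by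
  induction j with
  | zero => simp
  | succ n ih =>
    rw [Finset.sum_Icc_succ_top (Nat.succ_le_succ (Nat.zero_le n)),
      Finset.sum_range_succ, ih]

lemma aux_comp (B γ p : ℝ) (w : ℕ) (hγ : 0 < γ)
    (hw : 1 ≤ w) (hp : 0 < p) (hp1 : p < 1) (ξ η : ℕ → ℝ)
    (hξ0 : ∀ j, 1 ≤ j → 0 ≤ ξ j) (hη0 : ∀ j, 1 ≤ j → 0 ≤ η j)
    (hξrec : ∀ j, 1 ≤ j →
      (1 - p) / (1 + γ * ξ (j + 1))
        = 1 / (1 + γ * ξ j) - p / (1 + (γ / w) * (B - ∑ i ∈ Finset.Icc 1 j, ξ i)))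
    (hηrec : ∀ j, 1 ≤ j →
      (1 - p) / (1 + γ * η (j + 1))
        = 1 / (1 + γ * η j) - p / (1 + (γ / w) * (B - ∑ i ∈ Finset.Icc 1 j, η i)))
    (hξsummable : Summable (fun j : ℕ => ξ (j + 1)))
    (hηsummable : Summable (fun j : ℕ => η (j + 1)))
    (hξsum : ∑' j : ℕ, ξ (j + 1) = B) (hηsum : ∑' j : ℕ, η (j + 1) = B)
    (h1 : η 1 < ξ 1) : False := by
  have hwR : (0:ℝ) < w := by
    have : (1:ℝ) ≤ w := by exact_mod_cast hw
    linarith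
  have hgw : 0 < γ / w := div_pos hγ hwR
  have Sle : ∀ (f : ℕ → ℝ), (∀ j, 1 ≤ j → 0 ≤ f j) → Summable (fun j => f (j+1)) →
      (∑' j : ℕ, f (j+1)) = B → ∀ j, ∑ i ∈ Finset.Icc 1 j, f i ≤ B := by
    intro f hf0 hs hsum j
    rw [icc_sum_eq_range, ← hsum]
    exact Summable.sum_le_tsum _ (fun k _ => hf0 _ (Nat.le_add_left 1 k)) hs
  have Sleξ := Sle ξ hξ0 hξsummable hξsum
  have Sleη := Sle η hη0 hηsummable hηsum
  have key : ∀ j, 1 ≤ j → η j < ξ j ∧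
      (∑ i ∈ Finset.Icc 1 j, η i) < ∑ i ∈ Finset.Icc 1 j, ξ i := by
    intro j hj
    induction j, hj using Nat.le_induction with
    | base => exact ⟨h1, by simpa using h1⟩
    | succ j hj IH =>
      obtain ⟨hlt, hSlt⟩ := IH
      have hξj0 := hξ0 j hj
      have hηj0 := hη0 j hj
      have dη : 0 < 1 + γ * η j := by
        have := mul_nonneg hγ.le hηj0; linarith
      have hA : 1 / (1 + γ * ξ j) < 1 / (1 + γ * η j) := by
        apply one_div_lt_one_div_of_lt dη
        have := (mul_lt_mul_iff_right₀ hγ).mpr hlt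
        linarith
      have hRξ : 0 ≤ B - ∑ i ∈ Finset.Icc 1 j, ξ i := by linarith [Sleξ j]
      have dRξ : 0 < 1 + (γ/w) * (B - ∑ i ∈ Finset.Icc 1 j, ξ i) := by
        have := mul_nonneg hgw.le hRξ; linarith
      have dRη : 0 < 1 + (γ/w) * (B - ∑ i ∈ Finset.Icc 1 j, η i) := by
        have := mul_nonneg hgw.le (by linarith : (0:ℝ) ≤ B - ∑ i ∈ Finset.Icc 1 j, η i)
        linarith
      have hB2 : p / (1 + (γ/w) * (B - ∑ i ∈ Finset.Icc 1 j, η i))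
          < p / (1 + (γ/w) * (B - ∑ i ∈ Finset.Icc 1 j, ξ i)) := by
        apply div_lt_div_of_pos_left hp dRξ
        have := (mul_lt_mul_iff_right₀ hgw).mpr (by linarith :
          B - ∑ i ∈ Finset.Icc 1 j, ξ i < B - ∑ i ∈ Finset.Icc 1 j, η i)
        linarith
      have main : (1-p)/(1+γ*ξ (j+1)) < (1-p)/(1+γ*η (j+1)) := by
        rw [hξrec j hj, hηrec j hj]
        linarith
      have dξ1 : 0 < 1 + γ * ξ (j+1) := by
        have := mul_nonneg hγ.le (hξ0 (j+1) (Nat.le_succ_of_le hj)); linarith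
      have dη1 : 0 < 1 + γ * η (j+1) := by
        have := mul_nonneg hγ.le (hη0 (j+1) (Nat.le_succ_of_le hj)); linarith
      have hterm : η (j+1) < ξ (j+1) := by
        rw [div_lt_div_iff₀ dξ1 dη1] at main
        have hpp : (0:ℝ) < 1 - p := by linarith
        have h3 : 1 + γ * η (j+1) < 1 + γ * ξ (j+1) := (mul_lt_mul_iff_right₀ hpp).mp main
        have h4 : γ * η (j+1) < γ * ξ (j+1) := by linarith
        exact (mul_lt_mul_iff_right₀ hγ).mp h4
      refine ⟨hterm, ?_⟩
      rw [Finset.sum_Icc_succ_top (Nat.le_succ_of_le hj),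
        Finset.sum_Icc_succ_top (Nat.le_succ_of_le hj)]
      exact add_lt_add hSlt hterm
  have hlt := Summable.tsum_lt_tsum (f := fun k : ℕ => η (k+1)) (g := fun k : ℕ => ξ (k+1))
    (fun k => (key (k+1) (Nat.le_add_left 1 k)).1.le)
    ((key 1 le_rfl).1) hηsummable hξsummable
  rw [hξsum, hηsum] at hlt
  exact lt_irrefl B hlt

/-- A nonnegative sequence satisfying the stationarity recursion for all `j ≥ 1`
together with the total-energy constraint `∑_{j=1}^∞ ξ_j = B` is unique. -/
theorem optimal_sequence_unique (B γ p : ℝ) (w : ℕ) (hB : 0 < B) (hγ : 0 < γ)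
    (hw : 1 ≤ w) (hp : 0 < p) (hp1 : p < 1) (ξ η : ℕ → ℝ)
    (hξ0 : ∀ j, 1 ≤ j → 0 ≤ ξ j) (hη0 : ∀ j, 1 ≤ j → 0 ≤ η j)
    (hξrec : ∀ j, 1 ≤ j →
      (1 - p) / (1 + γ * ξ (j + 1))
        = 1 / (1 + γ * ξ j) - p / (1 + (γ / w) * (B - ∑ i ∈ Finset.Icc 1 j, ξ i)))
    (hηrec : ∀ j, 1 ≤ j →
      (1 - p) / (1 + γ * η (j + 1))
        = 1 / (1 + γ * η j) - p / (1 + (γ / w) * (B - ∑ i ∈ Finset.Icc 1 j, η i)))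
    (hξsummable : Summable (fun j : ℕ => ξ (j + 1)))
    (hηsummable : Summable (fun j : ℕ => η (j + 1)))
    (hξsum : ∑' j : ℕ, ξ (j + 1) = B) (hηsum : ∑' j : ℕ, η (j + 1) = B) :
    ∀ j, 1 ≤ j → ξ j = η j := by
  have h1 : ξ 1 = η 1 := by
    refine le_antisymm ?_ ?_
    · by_contra h
      exact aux_comp B γ p w hγ hw hp hp1 ξ η hξ0 hη0 hξrec hηrec
        hξsummable hηsummable hξsum hηsum (not_le.mp h)
    · by_contra h
      exact aux_comp B γ p w hγ hw hp hp1 η ξ hη0 hξ0 hηrec hξrec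
        hηsummable hξsummable hηsum hξsum (not_le.mp h)
  have key : ∀ j, 1 ≤ j → ξ j = η j ∧
      (∑ i ∈ Finset.Icc 1 j, ξ i) = ∑ i ∈ Finset.Icc 1 j, η i := by
    intro j hj
    induction j, hj using Nat.le_induction with
    | base => exact ⟨h1, by simpa using h1⟩
    | succ j hj IH =>
      obtain ⟨heq, hSeq⟩ := IH
      have main : (1-p)/(1+γ*ξ (j+1)) = (1-p)/(1+γ*η (j+1)) := by
        rw [hξrec j hj, hηrec j hj, heq, hSeq]
      have dξ1 : 0 < 1 + γ * ξ (j+1) := by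
        have := mul_nonneg hγ.le (hξ0 (j+1) (Nat.le_succ_of_le hj)); linarith
      have dη1 : 0 < 1 + γ * η (j+1) := by
        have := mul_nonneg hγ.le (hη0 (j+1) (Nat.le_succ_of_le hj)); linarith
      have hterm : ξ (j+1) = η (j+1) := by
        rw [div_eq_div_iff dξ1.ne' dη1.ne'] at main
        have hpp : (1:ℝ) - p ≠ 0 := by linarith
        have h3 : 1 + γ * η (j+1) = 1 + γ * ξ (j+1) :=
          mul_left_cancel₀ hpp main
        have h4 : γ * ξ (j+1) = γ * η (j+1) := by linarith
        exact mul_left_cancel₀ hγ.ne' h4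
      refine ⟨hterm, ?_⟩
      rw [Finset.sum_Icc_succ_top (Nat.le_succ_of_le hj),
        Finset.sum_Icc_succ_top (Nat.le_succ_of_le hj), hSeq, hterm]
  exact fun j hj => (key j hj).1
end
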